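/- arXiv:0903.4833 — 9 statements merged into one kernel-verified Lean document; each statement's English description precedes it below -/
import Mathlib

section
/- Let f:(0,z₀]→[1,∞) be a convex, non-increasing function with f(z₀)=1 which is differentiable at z₀ with f'(z₀)<0. Define g(k)=sup_{z≤z₀}(k-z)/f(z). Then g(k)=k-z₀ for all k ≥ k* where k* = z₀ - 1/f'(z₀). -/
theorem stmt_2 (z₀ : ℝ) (hz₀ : 0 < z₀) (f g : ℝ → ℝ) (f' : ℝ)
    (hconv : ConvexOn ℝ (Set.Ioc 0 z₀) f)
    (hanti : AntitoneOn f (Set.Ioc 0 z₀))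
    (hge : ∀ z ∈ Set.Ioc 0 z₀, 1 ≤ f z)
    (hfz₀ : f z₀ = 1)
    (hderiv : HasDerivWithinAt f f' (Set.Iic z₀) z₀)
    (hf'neg : f' < 0)
    (hg : ∀ k ∈ Set.Ioi (0:ℝ),
      g k = sSup ((fun z => (k - z) / f z) '' Set.Ioc 0 z₀)) :
    ∀ k, z₀ - 1 / f' ≤ k → g k = k - z₀ := by
  have hz₀mem : z₀ ∈ Set.Ioc 0 z₀ := ⟨hz₀, le_refl _⟩
  -- support line: f z ≥ 1 + f' * (z - z₀)
  have hsupport : ∀ z ∈ Set.Ioc 0 z₀, 1 + f' * (z - z₀) ≤ f z := by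
    intro z hz
    rcases eq_or_lt_of_le hz.2 with rfl | hzlt
    · simp [hfz₀]
    · have hslope : (f z - f z₀) / (z - z₀) ≤ f' := by
        have htend : Filter.Tendsto (slope f z₀) (nhdsWithin z₀ (Set.Iic z₀ \ {z₀}))
            (nhds f') := hasDerivWithinAt_iff_tendsto_slope.mp hderiv
        have hne : (nhdsWithin z₀ (Set.Iic z₀ \ {z₀})).NeBot := by
          rw [show Set.Iic z₀ \ {z₀} = Set.Iio z₀ by ext x; simp [lt_iff_le_and_ne]]
          exact nhdsLT_neBot z₀
        refine ge_of_tendsto htend ?_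
        filter_upwards [self_mem_nhdsWithin,
          eventually_nhdsWithin_of_eventually_nhds
            (eventually_gt_nhds hzlt)] with y hy hyz
        have hy' : y ∈ Set.Ioc 0 z₀ := ⟨lt_trans hz.1 hyz, hy.1⟩
        have := hconv.secant_mono hz₀mem hz hy' (ne_of_lt hzlt) hy.2 (le_of_lt hyz)
        simpa [slope_def_field] using this
      have hd : z - z₀ < 0 := by linarith
      have := (div_le_iff_of_neg hd).mp hslope
      rw [hfz₀] at this
      linarith
  intro k hk
  have hfpos : (0:ℝ) < -1 / f' := div_pos_of_neg_of_neg (by norm_num) hf'neg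
  have hkz : -1 / f' ≤ k - z₀ := by
    have : z₀ - 1 / f' = z₀ + (-1) / f' := by ring
    linarith [hk, this ▸ hk]
  have hkpos : (0:ℝ) < k := by linarith
  have hbound : ∀ z ∈ Set.Ioc 0 z₀, (k - z) / f z ≤ k - z₀ := by
    intro z hz
    have hf1 : (1:ℝ) ≤ f z := hge z hz
    have hfzpos : 0 < f z := lt_of_lt_of_le one_pos hf1
    rw [div_le_iff₀ hfzpos]
    have hsup := hsupport z hz
    have hkz' : 0 < k - z₀ := lt_of_lt_of_le hfpos hkz
    have h1 : (k - z₀) * (1 + f' * (z - z₀)) ≤ (k - z₀) * f z :=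
      mul_le_mul_of_nonneg_left hsup (le_of_lt hkz')
    -- need k - z ≤ (k - z₀) * (1 + f' * (z - z₀))
    have h2 : (1:ℝ) ≤ -(k - z₀) * f' := by
      have := mul_le_mul_of_nonneg_left hkz (le_of_lt (neg_pos.mpr hf'neg))
      have hf'ne : f' ≠ 0 := ne_of_lt hf'neg
      calc (1:ℝ) = -f' * (-1 / f') := by field_simp
        _ ≤ -f' * (k - z₀) := this
        _ = -(k - z₀) * f' := by ring
    nlinarith [hz.2, mul_le_mul_of_nonneg_left h2 (sub_nonneg.mpr hz.2)]
  rw [hg k hkpos]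
  apply le_antisymm
  · exact Real.sSup_le (by rintro x ⟨z, hz, rfl⟩; exact hbound z hz)
      (le_of_lt (lt_of_lt_of_le hfpos hkz))
  · apply le_csSup
    · exact ⟨k - z₀, by rintro x ⟨z, hz, rfl⟩; exact hbound z hz⟩
    · exact ⟨z₀, hz₀mem, by simp [hfz₀]⟩
end

section
/- Let f:(0,z₀]→[1,∞) be convex, non-increasing with f(z₀)=1 and left derivative at z₀ strictly negative. Define g(k)=sup_{z≤z₀}(k-z)/f(z) for k>0, and F(z)=sup_{k≥z}(k-z)/g(k) for z∈(0,z₀]. Then F(z)=f(z) for all z∈(0,z₀] (self-duality of the transform). -/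
/-- Key lemma: if `s < 0` is a subgradient of `f` at `z`, then `F z = f z`. -/
lemma key_selfdual (z₀ : ℝ) (f g F : ℝ → ℝ)
    (hge : ∀ z ∈ Set.Ioc 0 z₀, 1 ≤ f z)
    (hg : ∀ k ∈ Set.Ioi (0:ℝ),
      g k = sSup ((fun z => (k - z) / f z) '' Set.Ioc 0 z₀))
    (hF : ∀ z ∈ Set.Ioc (0:ℝ) z₀,
      F z = sSup ((fun k => (k - z) / g k) '' Set.Ici z))
    (z : ℝ) (hz : z ∈ Set.Ioc 0 z₀) (s : ℝ) (hs : s < 0)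
    (hsub : ∀ z' ∈ Set.Ioc 0 z₀, f z + s * (z' - z) ≤ f z') :
    F z = f z := by
  have hzpos : 0 < z := hz.1
  have hfz : 0 < f z := lt_of_lt_of_le one_pos (hge z hz)
  set k := z - f z / s with hkdef
  have hk : z < k := by
    have : f z / s < 0 := div_neg_of_pos_of_neg hfz hs
    simp only [hkdef]; linarith
  have hkpos : 0 < k := lt_trans hzpos hk
  have hid : s * (k - z) = -f z := by
    field_simp [hkdef, ne_of_lt hs]
    rw [hkdef]; field_simp [ne_of_lt hs]
    ring
  -- boundedness of the set defining g k'
  have hbdd : ∀ k' : ℝ, 0 < k' →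
      BddAbove ((fun z' => (k' - z') / f z') '' Set.Ioc 0 z₀) := by
    intro k' hk'
    refine ⟨k', ?_⟩
    rintro x ⟨z', hz', rfl⟩
    have hfz' : 0 < f z' := lt_of_lt_of_le one_pos (hge z' hz')
    rcases le_or_gt z' k' with h | h
    · have h1 : (k' - z') / f z' ≤ k' - z' := by
        apply div_le_self (by linarith) (hge z' hz')
      linarith [hz'.1]
    · have : (k' - z') / f z' ≤ 0 :=
        div_nonpos_of_nonpos_of_nonneg (by linarith) hfz'.le
      linarith
  have hgge : ∀ k' : ℝ, z ≤ k' → (k' - z) / f z ≤ g k' := by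
    intro k' hk'
    rw [hg k' (Set.mem_Ioi.mpr (lt_of_lt_of_le hzpos hk'))]
    exact le_csSup (hbdd k' (lt_of_lt_of_le hzpos hk')) ⟨z, hz, rfl⟩
  have hzhalf : z / 2 ∈ Set.Ioc 0 z₀ := ⟨by linarith, by linarith [hz.2]⟩
  have hgpos : ∀ k' : ℝ, z ≤ k' → 0 < g k' := by
    intro k' hk'
    have hk'pos : 0 < k' := lt_of_lt_of_le hzpos hk'
    have h1 : 0 < (k' - z / 2) / f (z / 2) :=
      div_pos (by linarith) (lt_of_lt_of_le one_pos (hge _ hzhalf))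
    have h2 : (k' - z / 2) / f (z / 2) ≤ g k' := by
      rw [hg k' (Set.mem_Ioi.mpr hk'pos)]
      exact le_csSup (hbdd k' hk'pos) ⟨z / 2, hzhalf, rfl⟩
    linarith
  -- g k is exactly (k - z) / f z
  have hgk : g k = (k - z) / f z := by
    rw [hg k (Set.mem_Ioi.mpr hkpos)]
    apply le_antisymm
    · apply csSup_le ((Set.nonempty_of_mem hz).image _)
      rintro x ⟨z', hz', rfl⟩
      have hfz' : 0 < f z' := lt_of_lt_of_le one_pos (hge z' hz')
      rw [div_le_div_iff₀ hfz' hfz]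
      have h1 : f z + s * (z' - z) ≤ f z' := hsub z' hz'
      nlinarith [mul_le_mul_of_nonneg_left h1 (le_of_lt (by linarith : (0:ℝ) < k - z))]
    · exact le_csSup (hbdd k hkpos) ⟨z, hz, rfl⟩
  -- now compute F z
  rw [hF z hz]
  have hmem : f z ∈ (fun k' => (k' - z) / g k') '' Set.Ici z := by
    refine ⟨k, Set.mem_Ici.mpr hk.le, ?_⟩
    show (k - z) / g k = f z
    rw [hgk]
    rw [div_div_eq_mul_div, mul_comm, mul_div_assoc,
      div_self (by linarith : k - z ≠ 0), mul_one]
  have hub : ∀ x ∈ (fun k' => (k' - z) / g k') '' Set.Ici z, x ≤ f z := by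
    rintro x ⟨k', hk', rfl⟩
    have hgp := hgpos k' hk'
    rw [div_le_iff₀ hgp]
    calc k' - z = f z * ((k' - z) / f z) := by field_simp
      _ ≤ f z * g k' := mul_le_mul_of_nonneg_left (hgge k' hk') hfz.le
  exact IsGreatest.csSup_eq ⟨hmem, hub⟩

theorem stmt_3 (z₀ : ℝ) (hz₀ : 0 < z₀) (f g F : ℝ → ℝ) (f' : ℝ)
    (hconv : ConvexOn ℝ (Set.Ioc 0 z₀) f)
    (hanti : AntitoneOn f (Set.Ioc 0 z₀))
    (hge : ∀ z ∈ Set.Ioc 0 z₀, 1 ≤ f z)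
    (hfz₀ : f z₀ = 1)
    (hderiv : HasDerivWithinAt f f' (Set.Iio z₀) z₀)
    (hf'neg : f' < 0)
    (hg : ∀ k ∈ Set.Ioi (0:ℝ),
      g k = sSup ((fun z => (k - z) / f z) '' Set.Ioc 0 z₀))
    (hF : ∀ z ∈ Set.Ioc (0:ℝ) z₀,
      F z = sSup ((fun k => (k - z) / g k) '' Set.Ici z)) :
    ∀ z ∈ Set.Ioc (0:ℝ) z₀, F z = f z := by
  have hz₀mem : z₀ ∈ Set.Ioc 0 z₀ := ⟨hz₀, le_refl _⟩
  -- f' is a subgradient at z₀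
  have hL1 : ∀ z' ∈ Set.Ioc 0 z₀, f z₀ + f' * (z' - z₀) ≤ f z' := by
    intro z' hz'
    rcases eq_or_lt_of_le hz'.2 with h | hlt
    · subst h; simp
    · -- slope from z' to z₀ is ≤ f'
      have hfilt : Set.Iio z₀ \ {z₀} = Set.Iio z₀ :=
        Set.diff_singleton_eq_self (by simp)
      have htend : Filter.Tendsto (slope f z₀) (nhdsWithin z₀ (Set.Iio z₀))
          (nhds f') := by
        rw [hasDerivWithinAt_iff_tendsto_slope, hfilt] at hderiv
        exact hderiv
      have hslope : (f z' - f z₀) / (z' - z₀) ≤ f' := by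
        apply ge_of_tendsto htend
        have hmem : Set.Ioo z' z₀ ∈ nhdsWithin z₀ (Set.Iio z₀) := by
          apply mem_nhdsWithin.mpr
          exact ⟨Set.Ioi z', isOpen_Ioi, hlt, by
            rintro w ⟨hw1, hw2⟩; exact ⟨hw1, hw2⟩⟩
        filter_upwards [hmem] with w hw
        have hwmem : w ∈ Set.Ioc 0 z₀ := ⟨lt_trans hz'.1 hw.1, hw.2.le⟩
        have := hconv.secant_mono hz₀mem hz' hwmem (ne_of_lt hlt) (ne_of_lt hw.2)
          hw.1.le
        simpa [slope_def_field, div_eq_div_iff] using this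
      rw [div_le_iff_of_neg (by linarith : z' - z₀ < 0)] at hslope
      linarith
  intro z hz
  rcases eq_or_lt_of_le hz.2 with h | hlt
  · subst h
    exact key_selfdual z f g F hge hg hF z hz f' hf'neg hL1
  · -- interior point: use the left derivative (sup of left slopes)
    set S := (fun z' => (f z' - f z) / (z' - z)) '' Set.Ioo 0 z with hSdef
    have hSne : S.Nonempty :=
      Set.Nonempty.image _ ⟨z / 2, half_pos hz.1, half_lt_self hz.1⟩
    have hubS : ∀ x ∈ S, x ≤ (f z₀ - f z) / (z₀ - z) := by
      rintro x ⟨z', hz', rfl⟩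
      have hz'mem : z' ∈ Set.Ioc 0 z₀ := ⟨hz'.1, by linarith [hz'.2, hz.2]⟩
      exact hconv.secant_mono hz hz'mem hz₀mem (ne_of_lt hz'.2) (ne_of_gt hlt)
        (by linarith [hz'.2])
    have hSbdd : BddAbove S := ⟨_, hubS⟩
    set s := sSup S with hsdef
    have hslope_z₀ : (f z₀ - f z) / (z₀ - z) ≤ f' := by
      rw [div_le_iff₀ (by linarith : (0:ℝ) < z₀ - z)]
      have := hL1 z hz
      linarith
    have hsneg : s < 0 := by
      have h1 : s ≤ (f z₀ - f z) / (z₀ - z) := csSup_le hSne hubS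
      linarith
    have hsub : ∀ z' ∈ Set.Ioc 0 z₀, f z + s * (z' - z) ≤ f z' := by
      intro z' hz'
      rcases lt_trichotomy z' z with h | h | h
      · have hmem : (f z' - f z) / (z' - z) ∈ S := ⟨z', ⟨hz'.1, h⟩, rfl⟩
        have h1 : (f z' - f z) / (z' - z) ≤ s := le_csSup hSbdd hmem
        rw [div_le_iff_of_neg (by linarith : z' - z < 0)] at h1
        linarith
      · subst h; simp
      · have h1 : s ≤ (f z' - f z) / (z' - z) := by
          apply csSup_le hSne
          rintro x ⟨w, hw, rfl⟩
          have hwmem : w ∈ Set.Ioc 0 z₀ := ⟨hw.1, by linarith [hw.2, hz.2]⟩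
          exact hconv.secant_mono hz hwmem hz' (ne_of_lt hw.2) (ne_of_gt h)
            (by linarith [hw.2])
        rw [le_div_iff₀ (by linarith : (0:ℝ) < z' - z)] at h1
        linarith
    exact key_selfdual z₀ f g F hge hg hF z hz s hsneg hsub
end

section
/- Let g:(0,∞)→[0,∞) be a non-negative, non-decreasing convex function satisfying (k-z₀)⁺ ≤ g(k) ≤ k for all k and g(k)=k-z₀ for k ≥ k* (for some k*>z₀). Define f(z)=sup_{k≥z}(k-z)/g(k) for z∈(0,z₀]. Then g(k)=sup_{z≤z₀}(k-z)/f(z) for all k>0. -/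
set_option maxHeartbeats 1000000


theorem stmt_4 (z₀ kstar : ℝ) (hz₀ : 0 < z₀) (hk : z₀ < kstar)
    (g f : ℝ → ℝ)
    (hconv : ConvexOn ℝ (Set.Ioi 0) g)
    (hmono : MonotoneOn g (Set.Ioi 0))
    (hbd : ∀ k ∈ Set.Ioi (0:ℝ), max (k - z₀) 0 ≤ g k ∧ g k ≤ k)
    (hlin : ∀ k, kstar ≤ k → g k = k - z₀)
    (hf : ∀ z ∈ Set.Ioc (0:ℝ) z₀,
      f z = sSup ((fun k => (k - z) / g k) '' Set.Ici z)) :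
    ∀ k ∈ Set.Ioi (0:ℝ),
      g k = sSup ((fun z => (k - z) / f z) '' Set.Ioc 0 z₀) := by
  have hg0 : ∀ t, 0 < t → 0 ≤ g t := fun t ht =>
    le_trans (le_max_right _ _) (hbd t ht).1
  have hgz : ∀ t, 0 < t → t - z₀ ≤ g t := fun t ht =>
    le_trans (le_max_left _ _) (hbd t ht).1
  have hgle : ∀ t, 0 < t → g t ≤ t := fun t ht => (hbd t ht).2
  have hgks : g kstar = kstar - z₀ := hlin kstar le_rfl
  -- f is nonnegative on Ioc 0 z₀
  have hfnn : ∀ z ∈ Set.Ioc (0:ℝ) z₀, 0 ≤ f z := by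
    intro z hz
    rw [hf z hz]
    apply Real.sSup_nonneg
    rintro x ⟨t, ht, rfl⟩
    have hzt : z ≤ t := ht
    exact div_nonneg (by linarith) (hg0 t (lt_of_lt_of_le hz.1 hzt))
  -- f z ≥ 1 when the defining set is bounded above
  have hfone : ∀ z ∈ Set.Ioc (0:ℝ) z₀,
      BddAbove ((fun t => (t - z) / g t) '' Set.Ici z) → 1 ≤ f z := by
    intro z hz hb
    rw [hf z hz]
    have hmem : (kstar - z) / g kstar ∈ (fun t => (t - z) / g t) '' Set.Ici z :=
      ⟨kstar, Set.mem_Ici.mpr (by linarith [hz.2]), rfl⟩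
    have h1 : 1 ≤ (kstar - z) / g kstar := by
      rw [hgks, le_div_iff₀ (by linarith)]
      linarith [hz.2]
    exact h1.trans (le_csSup hb hmem)
  intro k hk0
  simp only [Set.mem_Ioi] at hk0
  set T := (fun z => (k - z) / f z) '' Set.Ioc 0 z₀ with hT
  -- upper bound: each element of T is ≤ g k
  have hub : ∀ z ∈ Set.Ioc (0:ℝ) z₀, (k - z) / f z ≤ g k := by
    intro z hz
    have hfz := hf z hz
    by_cases hb : BddAbove ((fun t => (t - z) / g t) '' Set.Ici z)
    · have hf1 : 1 ≤ f z := hfone z hz hb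
      have hfpos : 0 < f z := lt_of_lt_of_le one_pos hf1
      rcases lt_or_ge k z with hkz | hkz
      · have : (k - z) / f z ≤ 0 :=
          div_nonpos_of_nonpos_of_nonneg (by linarith) hfpos.le
        linarith [hg0 k hk0]
      · rcases (hg0 k hk0).eq_or_lt with hgk | hgk
        · -- g k = 0; then k ≤ z, else contradiction with boundedness
          rcases hkz.eq_or_lt with hzk | hzk
          · rw [hzk]; simp only [sub_self, zero_div]; exact hg0 k hk0
          · exfalso
            set A := {t : ℝ | 0 < t ∧ g t = 0} with hA
            have hkA : k ∈ A := ⟨hk0, hgk.symm⟩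
            have hAne : A.Nonempty := ⟨k, hkA⟩
            have hAbd : BddAbove A := ⟨z₀, by
              rintro t ⟨ht0, htg⟩
              have := hgz t ht0
              show t ≤ z₀
              linarith⟩
            set a := sSup A with ha
            have hka : k ≤ a := le_csSup hAbd hkA
            have haz : a ≤ z₀ := csSup_le hAne (by
              rintro t ⟨ht0, htg⟩; linarith [hgz t ht0])
            set B := 2 * (kstar - z₀) / (kstar - a) with hB
            have hBpos : 0 < B := by
              apply div_pos <;> linarith
            set ε := min ((kstar - z₀) / 2) ((k - z) / (2 * B * f z)) with hε
            have hεpos : 0 < ε := by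
              apply lt_min
              · linarith
              · exact div_pos (by linarith) (by positivity)
            obtain ⟨b, hbA, hba⟩ := exists_lt_of_lt_csSup hAne
              (show a - ε < a by linarith)
            have hble : b ≤ a := le_csSup hAbd hbA
            obtain ⟨hb0, hbg⟩ := hbA
            set t := a + ε with htdef
            have htk : t < kstar := by
              have h1 : ε ≤ (kstar - z₀) / 2 := min_le_left _ _
              linarith
            have hbt : b < t := by linarith
            -- convexity bound
            set c := (t - b) / (kstar - b) with hc
            have hkb : (0:ℝ) < kstar - b := by linarith
            have hc0 : 0 ≤ c := div_nonneg (by linarith) hkb.le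
            have hc1 : c ≤ 1 := by
              rw [div_le_one hkb]; linarith
            have hcomb := hconv.2 (Set.mem_Ioi.mpr hb0)
              (Set.mem_Ioi.mpr (by linarith : (0:ℝ) < kstar))
              (by linarith : 0 ≤ 1 - c) hc0 (by ring)
            have hcb : c * (kstar - b) = t - b := by
              rw [hc]; field_simp
            have hpt : (1 - c) • b + c • kstar = t := by
              simp only [smul_eq_mul]
              nlinarith [hcb]
            rw [hpt] at hcomb
            have hgt_le : g t ≤ c * (kstar - z₀) := by
              rw [smul_eq_mul, smul_eq_mul, hbg, hgks] at hcomb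
              linarith
            have hgtpos : 0 < g t := by
              rcases (hg0 t (by linarith)).eq_or_lt with h | h
              · exfalso
                have : t ∈ A := ⟨by linarith, h.symm⟩
                have : t ≤ a := le_csSup hAbd this
                linarith
              · exact h
            have hcle : c ≤ 2 * ε / (kstar - a) := by
              apply div_le_div₀ (by positivity) (by linarith) (by linarith) (by linarith)
            have hgtB : g t ≤ ε * B := by
              calc g t ≤ c * (kstar - z₀) := hgt_le
                _ ≤ (2 * ε / (kstar - a)) * (kstar - z₀) :=
                    mul_le_mul_of_nonneg_right hcle (by linarith)
                _ = ε * B := by rw [hB]; ring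
            -- the element (t-z)/g t contradicts boundedness
            have hel : (t - z) / g t ≤ f z := by
              rw [hfz]
              exact le_csSup hb ⟨t, Set.mem_Ici.mpr (by linarith), rfl⟩
            have h2 : (k - z) / g t ≤ (t - z) / g t :=
              (div_le_div_iff_of_pos_right hgtpos).mpr (by linarith)
            have h1 : k - z ≤ f z * g t := by
              rw [← div_le_iff₀ hgtpos]
              exact h2.trans hel
            have h4 : ε * (2 * B * f z) ≤ k - z := by
              rw [← le_div_iff₀ (by positivity)]
              exact min_le_right _ _
            nlinarith [mul_le_mul_of_nonneg_left hgtB hfpos.le]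
        · -- g k > 0
          have hel : (k - z) / g k ≤ f z := by
            rw [hfz]
            exact le_csSup hb ⟨k, Set.mem_Ici.mpr hkz, rfl⟩
          rw [div_le_iff₀ hfpos]
          rw [div_le_iff₀ hgk] at hel
          nlinarith
    · rw [hfz, Real.sSup_of_not_bddAbove hb]
      simp only [div_zero]
      exact hg0 k hk0
  have hTne : T.Nonempty := ⟨_, ⟨z₀, ⟨hz₀, le_rfl⟩, rfl⟩⟩
  have hTub : ∀ x ∈ T, x ≤ g k := by
    rintro x ⟨z, hz, rfl⟩; exact hub z hz
  have hTbdd : BddAbove T := ⟨g k, hTub⟩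
  apply le_antisymm _ (Real.sSup_le hTub (hg0 k hk0))
  -- lower bound: g k ≤ sSup T
  rcases (hg0 k hk0).eq_or_lt with hgk | hgk
  · -- g k = 0
    rw [← hgk]
    set z' := min k z₀ with hz'
    have hz'mem : z' ∈ Set.Ioc (0:ℝ) z₀ := ⟨lt_min hk0 hz₀, min_le_right _ _⟩
    have he : (k - z') / f z' ∈ T := ⟨z', hz'mem, rfl⟩
    have : 0 ≤ (k - z') / f z' :=
      div_nonneg (by rw [hz', sub_nonneg]; exact min_le_left k z₀) (hfnn z' hz'mem)
    linarith [le_csSup hTbdd he]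
  · -- g k > 0 : supporting line argument
    set Sl := (fun t => (g t - g k) / (t - k)) '' Set.Ioi k with hSl
    have hSlne : Sl.Nonempty := ⟨_, ⟨k + 1, Set.mem_Ioi.mpr (by linarith), rfl⟩⟩
    have hslnn : ∀ x ∈ Sl, 0 ≤ x := by
      rintro x ⟨t, ht, rfl⟩
      simp only [Set.mem_Ioi] at ht
      exact div_nonneg (by
        have := hmono (Set.mem_Ioi.mpr hk0) (Set.mem_Ioi.mpr (by linarith)) ht.le
        linarith) (by linarith)
    have hSlbd : BddBelow Sl := ⟨0, hslnn⟩
    set m := sInf Sl with hm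
    have hm0 : 0 ≤ m := le_csInf hSlne hslnn
    have hsupp : ∀ t, 0 < t → g k + m * (t - k) ≤ g t := by
      intro t ht
      rcases lt_trichotomy t k with htk | htk | htk
      · have hsl : (g k - g t) / (k - t) ≤ m := by
          apply le_csInf hSlne
          rintro x ⟨s, hs, rfl⟩
          exact hconv.slope_mono_adjacent (Set.mem_Ioi.mpr ht)
            (Set.mem_Ioi.mpr (by linarith [Set.mem_Ioi.mp hs])) htk (Set.mem_Ioi.mp hs)
        rw [div_le_iff₀ (by linarith)] at hsl
        nlinarith
      · rw [htk]; simp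
      · have hsl : m ≤ (g t - g k) / (t - k) :=
          csInf_le hSlbd ⟨t, Set.mem_Ioi.mpr htk, rfl⟩
        rw [le_div_iff₀ (by linarith)] at hsl
        nlinarith
    have hm1 : m ≤ 1 := by
      set t₀ := max kstar (k + 1) with ht₀
      have ht₀k : k < t₀ := lt_of_lt_of_le (by linarith) (le_max_right _ _)
      have ht₀s : kstar ≤ t₀ := le_max_left _ _
      have hgt₀ : g t₀ = t₀ - z₀ := hlin t₀ ht₀s
      have hsl : m ≤ (g t₀ - g k) / (t₀ - k) :=
        csInf_le hSlbd ⟨t₀, Set.mem_Ioi.mpr ht₀k, rfl⟩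
      have : (g t₀ - g k) / (t₀ - k) ≤ 1 := by
        rw [div_le_one (by linarith), hgt₀]
        linarith [hgz k hk0]
      linarith
    have hmpos : 0 < m := by
      rcases hm0.eq_or_lt with h | h
      · exfalso
        have h1 := hsupp (g k / 2) (by positivity)
        have h2 := hgle (g k / 2) (by positivity)
        rw [← h] at h1
        simp only [zero_mul, add_zero] at h1
        linarith
      · exact h
    have hgmk : g k ≤ m * k := by
      apply le_of_forall_pos_le_add
      intro ε hε
      have h1 := hsupp ε hε
      have h2 := hgle ε hε
      nlinarith
    set zs := k - g k / m with hzs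
    have hzs0 : 0 ≤ zs := by
      rw [hzs, sub_nonneg, div_le_iff₀ hmpos]
      nlinarith
    have hzsz₀ : zs ≤ z₀ := by
      rw [hzs, sub_le_iff_le_add, ← sub_le_iff_le_add']
      rw [le_div_iff₀ hmpos]
      nlinarith [hgz k hk0, hg0 k hk0]
    have hzsk : zs ≤ k := by
      rw [hzs]
      have : 0 ≤ g k / m := div_nonneg hgk.le hmpos.le
      linarith
    have hgkm : m * (k - zs) = g k := by
      rw [hzs]
      field_simp
      ring
    apply le_of_forall_pos_le_add
    intro ε hε
    set δ := min ε (min k z₀) with hδ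
    have hδpos : 0 < δ := lt_min hε (lt_min hk0 hz₀)
    have hδε : δ ≤ ε := min_le_left _ _
    have hδk : δ ≤ k := (min_le_right _ _).trans (min_le_left _ _)
    have hδz₀ : δ ≤ z₀ := (min_le_right _ _).trans (min_le_right _ _)
    set z := max zs δ with hz
    have hzpos : 0 < z := lt_of_lt_of_le hδpos (le_max_right _ _)
    have hzz₀ : z ≤ z₀ := max_le hzsz₀ hδz₀
    have hzk : z ≤ k := max_le hzsk hδk
    have hzzs : zs ≤ z := le_max_left _ _
    have hzsd : z ≤ zs + δ := max_le (by linarith) (by linarith)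
    have hzmem : z ∈ Set.Ioc (0:ℝ) z₀ := ⟨hzpos, hzz₀⟩
    have hfz := hf z hzmem
    have hkey : ∀ x ∈ (fun t => (t - z) / g t) '' Set.Ici z, x ≤ 1 / m := by
      rintro x ⟨t, ht, rfl⟩
      simp only [Set.mem_Ici] at ht
      rcases ht.eq_or_lt with h | h
      · rw [← h]; simp; positivity
      · have ht0 : 0 < t := lt_trans hzpos h
        have hsp := hsupp t ht0
        have hgt : m * (t - z) ≤ g t := by nlinarith
        have hgtpos : 0 < g t := lt_of_lt_of_le (by nlinarith) hgt
        rw [div_le_div_iff₀ hgtpos hmpos]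
        linarith
    have hbS : BddAbove ((fun t => (t - z) / g t) '' Set.Ici z) := ⟨1 / m, hkey⟩
    have hfle : f z ≤ 1 / m := by
      rw [hfz]
      exact csSup_le ⟨_, ⟨z, Set.mem_Ici.mpr le_rfl, rfl⟩⟩ hkey
    have hf1 : 1 ≤ f z := hfone z hzmem hbS
    have hfpos : 0 < f z := lt_of_lt_of_le one_pos hf1
    have he : (k - z) / f z ∈ T := ⟨z, hzmem, rfl⟩
    have hem : m * (k - z) ≤ (k - z) / f z := by
      rw [le_div_iff₀ hfpos]
      have h1 : m * (k - z) * f z ≤ m * (k - z) * (1 / m) :=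
        mul_le_mul_of_nonneg_left hfle (mul_nonneg hm0 (by linarith))
      have h2 : m * (k - z) * (1 / m) = k - z := by field_simp
      linarith
    have hfin : g k ≤ m * (k - z) + ε := by
      have h1 : m * z ≤ m * (zs + δ) := mul_le_mul_of_nonneg_left hzsd hm0
      have h2 : m * δ ≤ δ := by nlinarith
      nlinarith
    calc g k ≤ m * (k - z) + ε := hfin
      _ ≤ (k - z) / f z + ε := by linarith
      _ ≤ sSup T + ε := by linarith [le_csSup hTbdd he]
end

section
/- Suppose σ:(0,∞)→(0,∞) is continuous, r>0, c>0, and define φ(x) = x·∫_x^∞ y^{-2} exp(-∫_c^y 2r/(zσ(z)²) dz) dy for x>0 (assuming the integrals are finite). Then φ solves the ODE (1/2)σ(x)²x²φ''(x) + r x φ'(x) − r φ(x) = 0. -/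
open MeasureTheory intervalIntegral

theorem stmt_7 (σ : ℝ → ℝ) (r c : ℝ) (hr : 0 < r) (hc : 0 < c)
    (hσpos : ∀ x > (0:ℝ), 0 < σ x)
    (hσcont : ContinuousOn σ (Set.Ioi 0))
    (φ : ℝ → ℝ)
    (hφ : ∀ x > (0:ℝ), φ x =
      x * ∫ y in Set.Ioi x, (1 / y ^ 2) *
        Real.exp (-(∫ z in c..y, 2 * r / (z * σ z ^ 2))))
    (hint : ∀ x > (0:ℝ), IntegrableOn
      (fun y => (1 / y ^ 2) *
        Real.exp (-(∫ z in c..y, 2 * r / (z * σ z ^ 2)))) (Set.Ioi x)) :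
    ∀ x > (0:ℝ),
      (1 / 2) * σ x ^ 2 * x ^ 2 * deriv (deriv φ) x
        + r * x * deriv φ x - r * φ x = 0 := by
  have hopen : IsOpen (Set.Ioi (0:ℝ)) := isOpen_Ioi
  -- the inner integrand
  set f : ℝ → ℝ := fun z => 2 * r / (z * σ z ^ 2) with hfdef
  have hfc : ContinuousOn f (Set.Ioi 0) := by
    apply ContinuousOn.div continuousOn_const
    · exact continuousOn_id.mul (hσcont.pow 2)
    · intro z hz
      have h1 : 0 < σ z := hσpos z hz
      have h2 : (0:ℝ) < z := hz
      positivity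
  -- derivative of the inner integral
  have hFd : ∀ y ∈ Set.Ioi (0:ℝ), HasDerivAt (fun y => ∫ z in c..y, f z) (f y) y := by
    intro y hy
    apply intervalIntegral.integral_hasDerivAt_right
    · apply ContinuousOn.intervalIntegrable
      apply hfc.mono
      intro z hz
      have h1 : min c y ≤ z := hz.1
      have h2 : (0:ℝ) < min c y := lt_min hc hy
      exact lt_of_lt_of_le h2 h1
    · exact hfc.stronglyMeasurableAtFilter hopen y hy
    · exact hfc.continuousAt (hopen.mem_nhds hy)
  have hFc : ContinuousOn (fun y => ∫ z in c..y, f z) (Set.Ioi 0) :=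
    fun y hy => ((hFd y hy).continuousAt).continuousWithinAt
  -- the outer integrand
  set g : ℝ → ℝ := fun y => (1 / y ^ 2) * Real.exp (-(∫ z in c..y, f z)) with hgdef
  have hgc : ContinuousOn g (Set.Ioi 0) := by
    apply ContinuousOn.mul
    · exact ContinuousOn.div continuousOn_const (continuousOn_id.pow 2)
        (fun y hy => pow_ne_zero 2 (ne_of_gt hy))
    · exact Real.continuous_exp.comp_continuousOn hFc.neg
  -- derivative of g
  have hgd : ∀ y ∈ Set.Ioi (0:ℝ), HasDerivAt g
      ((-(2 * y) / (y ^ 2) ^ 2) * Real.exp (-(∫ z in c..y, f z))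
        + (1 / y ^ 2) * (Real.exp (-(∫ z in c..y, f z)) * (-(f y)))) y := by
    intro y hy
    have h1 : HasDerivAt (fun y : ℝ => 1 / y ^ 2) (-(2 * y) / (y ^ 2) ^ 2) y := by
      have hp : HasDerivAt (fun y : ℝ => y ^ 2) (2 * y) y := by
        simpa using hasDerivAt_pow 2 y
      have hinv := hp.inv (pow_ne_zero 2 (ne_of_gt (Set.mem_Ioi.mp hy)))
      refine hinv.congr_of_eventuallyEq (Filter.Eventually.of_forall fun z => ?_)
      simp [one_div]
    have h2 : HasDerivAt (fun y => Real.exp (-(∫ z in c..y, f z)))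
        (Real.exp (-(∫ z in c..y, f z)) * (-(f y))) y := ((hFd y hy).neg).exp
    exact h1.mul h2
  -- the outer integral
  set G : ℝ → ℝ := fun x => ∫ y in Set.Ioi x, g y with hGdef
  intro x₀ hx₀
  set a := x₀ / 2 with hadef
  have ha0 : 0 < a := by positivity
  have hax : a < x₀ := by rw [hadef]; linarith
  have hx₀a : x₀ ∈ Set.Ioi a := hax
  -- splitting identity for G
  have hGa : ∀ x ∈ Set.Ioi a, G x = G a - ∫ y in a..x, g y := by
    intro x hx
    have hle : a ≤ x := le_of_lt hx
    have hx0 : 0 < x := lt_trans ha0 hx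
    have hsplit : G a = (∫ y in Set.Ioc a x, g y) + G x := by
      rw [hGdef]
      rw [← MeasureTheory.setIntegral_union (Set.Ioc_disjoint_Ioi le_rfl)
        measurableSet_Ioi ((hint a ha0).mono_set Set.Ioc_subset_Ioi_self) (hint x hx0)]
      rw [Set.Ioc_union_Ioi_eq_Ioi hle]
    rw [intervalIntegral.integral_of_le hle]
    linarith [hsplit]
  -- derivative of G
  have hGd : ∀ x ∈ Set.Ioi a, HasDerivAt G (-(g x)) x := by
    intro x hx
    have hx0 : 0 < x := lt_trans ha0 hx
    have hii : IntervalIntegrable g volume a x := by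
      rw [intervalIntegrable_iff]
      rw [Set.uIoc_of_le (le_of_lt hx)]
      exact (hint a ha0).mono_set Set.Ioc_subset_Ioi_self
    have hI : HasDerivAt (fun x => ∫ y in a..x, g y) (g x) x :=
      intervalIntegral.integral_hasDerivAt_right hii
        (hgc.stronglyMeasurableAtFilter hopen x hx0)
        (hgc.continuousAt (hopen.mem_nhds hx0))
    have hD : HasDerivAt (fun x => G a - ∫ y in a..x, g y) (-(g x)) x := by
      have hsub := (hasDerivAt_const x (G a)).sub hI
      simp only [zero_sub] at hsub
      exact hsub
    apply hD.congr_of_eventuallyEq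
    exact Filter.eventuallyEq_of_mem (isOpen_Ioi.mem_nhds hx) hGa
  -- derivative of φ
  have hφd : ∀ x ∈ Set.Ioi a, HasDerivAt φ (G x - x * g x) x := by
    intro x hx
    have hx0 : 0 < x := lt_trans ha0 hx
    have h1 : HasDerivAt (fun x => x * G x) (1 * G x + x * -(g x)) x :=
      (hasDerivAt_id x).mul (hGd x hx)
    have h2 : HasDerivAt (fun x => x * G x) (G x - x * g x) x := by
      convert h1 using 1; ring
    apply h2.congr_of_eventuallyEq
    exact Filter.eventuallyEq_of_mem (hopen.mem_nhds hx0) (fun y hy => hφ y hy)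
  -- identify deriv φ on Ioi a
  have hderφ : Set.EqOn (deriv φ) (fun x => G x - x * g x) (Set.Ioi a) :=
    fun x hx => (hφd x hx).deriv
  have hd1 : deriv φ x₀ = G x₀ - x₀ * g x₀ := hderφ hx₀a
  -- second derivative
  have hd2fun : HasDerivAt (fun x => G x - x * g x)
      (-(g x₀) - (1 * g x₀ + x₀ * ((-(2 * x₀) / (x₀ ^ 2) ^ 2) * Real.exp (-(∫ z in c..x₀, f z))
        + (1 / x₀ ^ 2) * (Real.exp (-(∫ z in c..x₀, f z)) * (-(f x₀)))))) x₀ :=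
    (hGd x₀ hx₀a).sub ((hasDerivAt_id x₀).mul (hgd x₀ hx₀))
  have hd2 : deriv (deriv φ) x₀
      = -(g x₀) - (1 * g x₀ + x₀ * ((-(2 * x₀) / (x₀ ^ 2) ^ 2) * Real.exp (-(∫ z in c..x₀, f z))
        + (1 / x₀ ^ 2) * (Real.exp (-(∫ z in c..x₀, f z)) * (-(f x₀))))) := by
    have heq : deriv φ =ᶠ[nhds x₀] fun x => G x - x * g x :=
      Filter.eventuallyEq_of_mem (isOpen_Ioi.mem_nhds hx₀a) hderφ
    rw [heq.deriv_eq]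
    exact hd2fun.deriv
  have hφx : φ x₀ = x₀ * G x₀ := hφ x₀ hx₀
  rw [hd1, hd2, hφx, hgdef, hfdef]
  have hσ0 : σ x₀ ≠ 0 := ne_of_gt (hσpos x₀ hx₀)
  have hx0 : x₀ ≠ 0 := ne_of_gt hx₀
  field_simp
  ring
end

section
/- With φ(x) = x·∫_x^∞ y^{-2} exp(-∫_c^y 2r/(zσ(z)²) dz) dy for continuous positive σ and r,c>0, the derivative satisfies φ'(x₀) = exp(-∫_c^{x₀} 2r/(zσ(z)²) dz) · ∫_{x₀}^∞ y^{-2}(exp(-∫_{x₀}^y 2r/(zσ(z)²) dz) − 1) dy, and in particular φ'(x₀) < 0. -/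
open MeasureTheory intervalIntegral

theorem stmt_8 (σ : ℝ → ℝ) (r c x₀ : ℝ) (hr : 0 < r) (hc : 0 < c)
    (hx₀ : 0 < x₀)
    (hσpos : ∀ x > (0:ℝ), 0 < σ x)
    (hσcont : ContinuousOn σ (Set.Ioi 0))
    (φ : ℝ → ℝ)
    (hφ : ∀ x > (0:ℝ), φ x =
      x * ∫ y in Set.Ioi x, (1 / y ^ 2) *
        Real.exp (-(∫ z in c..y, 2 * r / (z * σ z ^ 2))))
    (hint : ∀ x > (0:ℝ), IntegrableOn
      (fun y => (1 / y ^ 2) *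
        Real.exp (-(∫ z in c..y, 2 * r / (z * σ z ^ 2)))) (Set.Ioi x)) :
    deriv φ x₀ =
      Real.exp (-(∫ z in c..x₀, 2 * r / (z * σ z ^ 2))) *
        ∫ y in Set.Ioi x₀, (1 / y ^ 2) *
          (Real.exp (-(∫ z in x₀..y, 2 * r / (z * σ z ^ 2))) - 1)
    ∧ deriv φ x₀ < 0 := by
  set g : ℝ → ℝ := fun z => 2 * r / (z * σ z ^ 2) with hgdef
  set f : ℝ → ℝ := fun y => 1 / y ^ 2 * Real.exp (-(∫ z in c..y, g z)) with hfdef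
  set E : ℝ := Real.exp (-(∫ z in c..x₀, g z)) with hEdef
  have hE : 0 < E := Real.exp_pos _
  -- continuity and positivity of g
  have hgcont : ContinuousOn g (Set.Ioi 0) := by
    apply ContinuousOn.div continuousOn_const (continuousOn_id.mul (hσcont.pow 2))
    intro z hz
    have h1 : 0 < σ z := hσpos z hz
    have h2 : (0:ℝ) < z := hz
    show z * σ z ^ 2 ≠ 0
    positivity
  have hgpos : ∀ z ∈ Set.Ioi (0:ℝ), 0 < g z := by
    intro z hz
    have h1 : 0 < σ z := hσpos z hz
    have h2 : (0:ℝ) < z := hz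
    simp only [hgdef]
    positivity
  have hgii : ∀ u v : ℝ, 0 < u → 0 < v → IntervalIntegrable g volume u v := by
    intro u v hu hv
    apply (hgcont.mono ?_).intervalIntegrable
    intro x hx
    rcases Set.mem_uIcc.mp hx with h | h
    · exact lt_of_lt_of_le hu h.1
    · exact lt_of_lt_of_le hv h.1
  have hIadd : ∀ y : ℝ, 0 < y →
      (∫ z in c..y, g z) = (∫ z in c..x₀, g z) + ∫ z in x₀..y, g z :=
    fun y hy =>
      (intervalIntegral.integral_add_adjacent_intervals (hgii c x₀ hc hx₀)
        (hgii x₀ y hx₀ hy)).symm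
  -- continuity of f
  have hIcont : ContinuousOn (fun y => ∫ z in c..y, g z) (Set.Ioi 0) := by
    intro y hy
    exact ((intervalIntegral.integral_hasDerivAt_right (hgii c y hc hy)
      ((hgcont.stronglyMeasurableAtFilter isOpen_Ioi) y hy)
      (hgcont.continuousAt (isOpen_Ioi.mem_nhds hy))).continuousAt).continuousWithinAt
  have hfcont : ContinuousOn f (Set.Ioi 0) := by
    apply ContinuousOn.mul
    · exact ContinuousOn.div continuousOn_const (continuousOn_id.pow 2)
        (fun y hy => by simpa using (pow_ne_zero 2 (ne_of_gt (Set.mem_Ioi.mp hy))))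
    · exact Real.continuous_exp.comp_continuousOn hIcont.neg
  -- integrability of y⁻²
  have hp2 : IntegrableOn (fun y : ℝ => 1 / y ^ 2) (Set.Ioi x₀) := by
    apply (integrableOn_Ioi_rpow_of_lt (by norm_num : (-2:ℝ) < -1) hx₀).congr_fun
      ?_ measurableSet_Ioi
    intro y hy
    have hy0 : (0:ℝ) < y := hx₀.trans hy
    show y ^ ((-2:ℝ)) = 1 / y ^ 2
    rw [show ((-2:ℝ)) = -(2:ℕ) by norm_num, Real.rpow_neg hy0.le, Real.rpow_natCast,
      one_div]
  have hval : (∫ y in Set.Ioi x₀, (1:ℝ) / y ^ 2) = 1 / x₀ := by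
    rw [setIntegral_congr_fun measurableSet_Ioi
      (g := fun y : ℝ => y ^ (-2 : ℝ)) ?_]
    · rw [integral_Ioi_rpow_of_lt (by norm_num : (-2:ℝ) < -1) hx₀]
      rw [show ((-2:ℝ) + 1) = -1 by norm_num, Real.rpow_neg_one]
      field_simp
    · intro y hy
      have hy0 : (0:ℝ) < y := hx₀.trans hy
      show 1 / y ^ 2 = y ^ ((-2:ℝ))
      rw [show ((-2:ℝ)) = -(2:ℕ) by norm_num, Real.rpow_neg hy0.le, Real.rpow_natCast,
        one_div]
  -- local representation of the tail integral
  set a : ℝ := x₀ / 2 with hadef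
  have ha : 0 < a := by positivity
  have hax : a < x₀ := by simp only [hadef]; linarith
  have hC : ∀ x ∈ Set.Ioi a, (∫ y in Set.Ioi x, f y)
      = (∫ y in Set.Ioi a, f y) - ∫ y in a..x, f y := by
    intro x hx
    have hax' : a ≤ x := le_of_lt hx
    rw [intervalIntegral.integral_of_le hax']
    have hsplit : (∫ y in Set.Ioi a, f y)
        = (∫ y in Set.Ioc a x, f y) + ∫ y in Set.Ioi x, f y := by
      rw [← MeasureTheory.setIntegral_union (Set.Ioc_disjoint_Ioi le_rfl)
        measurableSet_Ioi ((hint a ha).mono_set Set.Ioc_subset_Ioi_self)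
        (hint x (ha.trans hx)), Set.Ioc_union_Ioi_eq_Ioi hax']
    rw [hsplit]; ring
  -- FTC
  have hfii : IntervalIntegrable f volume a x₀ := by
    apply (hfcont.mono ?_).intervalIntegrable
    intro x hx
    rcases Set.mem_uIcc.mp hx with h | h
    · exact lt_of_lt_of_le ha h.1
    · exact lt_of_lt_of_le hx₀ h.1
  have hFTC : HasDerivAt (fun u => ∫ y in a..u, f y) (f x₀) x₀ :=
    intervalIntegral.integral_hasDerivAt_right hfii
      ((hfcont.stronglyMeasurableAtFilter isOpen_Ioi) x₀ hx₀)
      (hfcont.continuousAt (isOpen_Ioi.mem_nhds hx₀))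
  have hD : HasDerivAt φ ((∫ y in Set.Ioi x₀, f y) - x₀ * f x₀) x₀ := by
    have h1 : HasDerivAt (fun x => x * ((∫ y in Set.Ioi a, f y) - ∫ y in a..x, f y))
        (1 * ((∫ y in Set.Ioi a, f y) - ∫ y in a..x₀, f y) + x₀ * (0 - f x₀)) x₀ :=
      (hasDerivAt_id x₀).mul ((hasDerivAt_const x₀ _).sub hFTC)
    have heq : φ =ᶠ[nhds x₀]
        fun x => x * ((∫ y in Set.Ioi a, f y) - ∫ y in a..x, f y) := by
      filter_upwards [isOpen_Ioi.mem_nhds (show x₀ ∈ Set.Ioi a from hax)] with x hx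
      rw [hφ x (ha.trans hx), hC x hx]
    have h2 := h1.congr_of_eventuallyEq heq
    refine h2.congr_deriv ?_
    rw [hC x₀ hax]
    ring
  -- key identity
  have hkey : (∫ y in Set.Ioi x₀, f y) - x₀ * f x₀
      = E * ∫ y in Set.Ioi x₀, (1 / y ^ 2) *
          (Real.exp (-(∫ z in x₀..y, g z)) - 1) := by
    rw [← MeasureTheory.integral_const_mul]
    have hsub : Set.EqOn
        (fun y => E * (1 / y ^ 2 * (Real.exp (-(∫ z in x₀..y, g z)) - 1)))
        (fun y => f y - E * (1 / y ^ 2)) (Set.Ioi x₀) := by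
      intro y hy
      have hy0 : (0:ℝ) < y := hx₀.trans hy
      simp only [hfdef]
      rw [hIadd y hy0]
      rw [neg_add, Real.exp_add]
      ring
    rw [setIntegral_congr_fun measurableSet_Ioi hsub]
    rw [MeasureTheory.integral_sub (hint x₀ hx₀) (hp2.const_mul E)]
    rw [MeasureTheory.integral_const_mul, hval]
    simp only [hfdef]
    field_simp
    ring
  -- negativity of the integral
  have hhneg : ∀ y ∈ Set.Ioi x₀,
      (1 / y ^ 2) * (Real.exp (-(∫ z in x₀..y, g z)) - 1) < 0 := by
    intro y hy
    have hy0 : (0:ℝ) < y := hx₀.trans hy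
    have hB : 0 < ∫ z in x₀..y, g z :=
      intervalIntegral.intervalIntegral_pos_of_pos_on (hgii x₀ y hx₀ hy0)
        (fun z hz => hgpos z (Set.mem_Ioi.mpr (hx₀.trans hz.1))) hy
    have hlt : Real.exp (-(∫ z in x₀..y, g z)) < 1 := by
      rw [Real.exp_lt_one_iff]; linarith
    have h2 : (0:ℝ) < 1 / y ^ 2 := by positivity
    exact mul_neg_of_pos_of_neg h2 (by linarith)
  have hhint : IntegrableOn
      (fun y => (1 / y ^ 2) * (Real.exp (-(∫ z in x₀..y, g z)) - 1))
      (Set.Ioi x₀) := by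
    apply IntegrableOn.congr_fun (((hint x₀ hx₀).const_mul E⁻¹).sub hp2) ?_
      measurableSet_Ioi
    intro y hy
    have hy0 : (0:ℝ) < y := hx₀.trans hy
    simp only [Pi.sub_apply, hfdef]
    rw [hIadd y hy0, neg_add, Real.exp_add, hEdef]
    have h1 := Real.exp_ne_zero (-(∫ z in c..x₀, g z))
    have h2 : y ≠ 0 := ne_of_gt hy0
    field_simp
  have hneg : (∫ y in Set.Ioi x₀,
      (1 / y ^ 2) * (Real.exp (-(∫ z in x₀..y, g z)) - 1)) < 0 := by
    have hpos : 0 < ∫ y in Set.Ioi x₀,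
        -((1 / y ^ 2) * (Real.exp (-(∫ z in x₀..y, g z)) - 1)) := by
      refine (setIntegral_pos_iff_support_of_nonneg_ae ?_ ?_).mpr ?_
      · exact (ae_restrict_iff' measurableSet_Ioi).mpr
          (ae_of_all _ fun y hy => le_of_lt (neg_pos.mpr (hhneg y hy)))
      · exact hhint.neg
      · refine lt_of_lt_of_le ?_ (measure_mono fun y hy =>
          Set.mem_inter (Function.mem_support.mpr
            (ne_of_gt (neg_pos.mpr (hhneg y hy)))) hy)
        simp [Real.volume_Ioi]
    rw [MeasureTheory.integral_neg] at hpos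
    linarith
  have hderiv : deriv φ x₀ = E * ∫ y in Set.Ioi x₀, (1 / y ^ 2) *
      (Real.exp (-(∫ z in x₀..y, g z)) - 1) := hD.deriv.trans hkey
  refine ⟨hderiv, ?_⟩
  rw [hderiv]
  exact mul_neg_of_pos_of_neg hE hneg
end

section
/- Let φ:(0,x₀]→(0,∞) be convex and strictly decreasing with φ(x₀)=1, twice continuously differentiable with φ''>0 on (0,x₀), and φ'(x₀)<0. Define P(K)=sup_{z≤x₀}(K-z)/φ(z). Then P is continuously differentiable on (0, K̂) where K̂ = x₀ − 1/φ'(x₀), and for K<K̂ one has P'(K) = 1/φ(z(K)), where z(K)∈(0,x₀) is the unique point satisfying (K−z)φ'(z)+φ(z)=0. -/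
open Set Filter Topology

theorem stmt_9 (x₀ : ℝ) (hx₀ : 0 < x₀) (φ P z : ℝ → ℝ)
    (hC2 : ContDiffOn ℝ 2 φ (Set.Ioo 0 x₀))
    (hφ'' : ∀ x ∈ Set.Ioo (0:ℝ) x₀, 0 < deriv (deriv φ) x)
    (hdec : StrictAntiOn φ (Set.Ioc 0 x₀))
    (hconv : ConvexOn ℝ (Set.Ioc 0 x₀) φ)
    (hφx₀ : φ x₀ = 1)
    (hφ'x₀ : deriv φ x₀ < 0)
    (hP : ∀ K > (0:ℝ),
      P K = sSup ((fun w => (K - w) / φ w) '' Set.Ioc 0 x₀))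
    (hz : ∀ K ∈ Set.Ioo (0:ℝ) (x₀ - 1 / deriv φ x₀),
      z K ∈ Set.Ioo 0 x₀ ∧ (K - z K) * deriv φ (z K) + φ (z K) = 0)
    (hzuniq : ∀ K ∈ Set.Ioo (0:ℝ) (x₀ - 1 / deriv φ x₀),
      ∀ w ∈ Set.Ioo (0:ℝ) x₀,
        (K - w) * deriv φ w + φ w = 0 → w = z K) :
    ContDiffOn ℝ 1 P (Set.Ioo 0 (x₀ - 1 / deriv φ x₀)) ∧
    ∀ K ∈ Set.Ioo (0:ℝ) (x₀ - 1 / deriv φ x₀),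
      HasDerivAt P (1 / φ (z K)) K := by
  set Kh := x₀ - 1 / deriv φ x₀ with hKhdef
  -- basic facts about φ
  have hφ1 : ∀ w ∈ Set.Ioc (0:ℝ) x₀, (1:ℝ) ≤ φ w := by
    intro w hw
    rcases eq_or_lt_of_le hw.2 with h | h
    · rw [h, hφx₀]
    · have := hdec hw (right_mem_Ioc.mpr hx₀) h
      rw [hφx₀] at this; linarith
  have hφpos : ∀ w ∈ Set.Ioc (0:ℝ) x₀, 0 < φ w := fun w hw => lt_of_lt_of_le one_pos (hφ1 w hw)
  have hdiffAt : ∀ w ∈ Set.Ioo (0:ℝ) x₀, DifferentiableAt ℝ φ w := fun w hw =>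
    (hC2.contDiffAt (isOpen_Ioo.mem_nhds hw)).differentiableAt (by norm_num)
  have hdiffx₀ : DifferentiableAt ℝ φ x₀ := by
    by_contra h
    rw [deriv_zero_of_not_differentiableAt h] at hφ'x₀
    exact lt_irrefl 0 hφ'x₀
  have hφ'le : ∀ w ∈ Set.Ioo (0:ℝ) x₀, deriv φ w ≤ 0 := by
    intro w hw
    have hs : Tendsto (slope φ w) (𝓝[>] w) (𝓝 (deriv φ w)) :=
      ((hasDerivAt_iff_tendsto_slope.1 (hdiffAt w hw).hasDerivAt).mono_left
        (nhdsWithin_mono w (fun t ht => ne_of_gt ht)))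
    refine le_of_tendsto hs ?_
    filter_upwards [Ioo_mem_nhdsGT_of_mem ⟨le_refl w, hw.2⟩] with t ht
    have h1 : φ t < φ w := hdec ⟨hw.1, le_of_lt hw.2⟩ ⟨lt_trans hw.1 ht.1, le_of_lt ht.2⟩ ht.1
    have h2 : 0 < t - w := by linarith [ht.1]
    rw [slope_def_field]
    exact le_of_lt (div_neg_of_neg_of_pos (by linarith) h2)
  have hC1 : ContDiffOn ℝ 1 (deriv φ) (Set.Ioo 0 x₀) :=
    hC2.deriv_of_isOpen isOpen_Ioo (by norm_num)
  have hd2 : ∀ w ∈ Set.Ioo (0:ℝ) x₀, HasDerivAt (deriv φ) (deriv (deriv φ) w) w := fun w hw =>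
    ((hC1.contDiffAt (isOpen_Ioo.mem_nhds hw)).differentiableAt (by norm_num)).hasDerivAt
  -- derivative and continuity of the auxiliary function h
  have hDh : ∀ (K : ℝ), ∀ w ∈ Set.Ioo (0:ℝ) x₀,
      HasDerivAt (fun t => (K - t) * deriv φ t + φ t) ((K - w) * deriv (deriv φ) w) w := by
    intro K w hw
    have h1 : HasDerivAt (fun t : ℝ => K - t) (-1) w := (hasDerivAt_id w).const_sub K
    have h2 : HasDerivAt (fun t => (K - t) * deriv φ t + φ t)
        (-1 * deriv φ w + (K - w) * deriv (deriv φ) w + deriv φ w) w :=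
      (h1.mul (hd2 w hw)).add (hdiffAt w hw).hasDerivAt
    convert h2 using 1
    ring
  have hconth : ∀ K : ℝ,
      ContinuousOn (fun t => (K - t) * deriv φ t + φ t) (Set.Ioo 0 x₀) := fun K =>
    ((continuousOn_const.sub continuousOn_id).mul hC1.continuousOn).add hC2.continuousOn
  -- the sign lemma
  have hsign : ∀ K ∈ Set.Ioo (0:ℝ) Kh, ∀ w ∈ Set.Ioo (0:ℝ) x₀,
      (w < z K → (K - w) * deriv φ w + φ w < 0) ∧
      (z K < w → 0 < (K - w) * deriv φ w + φ w) := by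
    intro K hK
    obtain ⟨hzK, hfoc⟩ := hz K hK
    have hφ'zK : deriv φ (z K) < 0 := by
      rcases lt_or_eq_of_le (hφ'le (z K) hzK) with h | h
      · exact h
      · exfalso
        rw [h] at hfoc
        have := hφ1 (z K) ⟨hzK.1, le_of_lt hzK.2⟩
        simp at hfoc
        linarith
    have hzKltK : z K < K := by
      by_contra h
      push_neg at h
      have h1 : 0 ≤ (K - z K) * deriv φ (z K) := by nlinarith
      have := hφ1 (z K) ⟨hzK.1, le_of_lt hzK.2⟩
      linarith
    intro w hw
    constructor
    · intro hwz
      have hsub : Set.Icc w (z K) ⊆ Set.Ioo 0 x₀ := fun t ht =>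
        ⟨lt_of_lt_of_le hw.1 ht.1, lt_of_le_of_lt ht.2 hzK.2⟩
      have hmono : StrictMonoOn (fun t => (K - t) * deriv φ t + φ t) (Set.Icc w (z K)) := by
        refine strictMonoOn_of_deriv_pos (convex_Icc _ _) ((hconth K).mono hsub) ?_
        intro t ht
        rw [interior_Icc] at ht
        have ht' := hsub ⟨le_of_lt ht.1, le_of_lt ht.2⟩
        rw [(hDh K t ht').deriv]
        exact mul_pos (by linarith [ht.2]) (hφ'' t ht')
      have := hmono ⟨le_refl w, le_of_lt hwz⟩ ⟨le_of_lt hwz, le_refl _⟩ hwz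
      simpa [hfoc] using this
    · intro hzw
      rcases lt_or_ge w K with hwK | hwK
      · have hsub : Set.Icc (z K) w ⊆ Set.Ioo 0 x₀ := fun t ht =>
          ⟨lt_of_lt_of_le hzK.1 ht.1, lt_of_le_of_lt ht.2 hw.2⟩
        have hmono : StrictMonoOn (fun t => (K - t) * deriv φ t + φ t) (Set.Icc (z K) w) := by
          refine strictMonoOn_of_deriv_pos (convex_Icc _ _) ((hconth K).mono hsub) ?_
          intro t ht
          rw [interior_Icc] at ht
          have ht' := hsub ⟨le_of_lt ht.1, le_of_lt ht.2⟩
          rw [(hDh K t ht').deriv]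
          exact mul_pos (by linarith [ht.2]) (hφ'' t ht')
        have := hmono ⟨le_refl _, le_of_lt hzw⟩ ⟨le_of_lt hzw, le_refl _⟩ hzw
        simpa [hfoc] using this
      · have h1 : 0 ≤ (K - w) * deriv φ w := by nlinarith [hφ'le w hw]
        have := hφ1 w ⟨hw.1, le_of_lt hw.2⟩
        linarith
  -- derivative of the objective g
  have hDg : ∀ (K : ℝ), ∀ w ∈ Set.Ioo (0:ℝ) x₀,
      HasDerivAt (fun t => (K - t) / φ t) (-((K - w) * deriv φ w + φ w) / (φ w) ^ 2) w := by
    intro K w hw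
    have h1 : HasDerivAt (fun t : ℝ => K - t) (-1) w := (hasDerivAt_id w).const_sub K
    have h2 : HasDerivAt (fun t => (K - t) / φ t) ((-1 * φ w - (K - w) * deriv φ w) / φ w ^ 2) w :=
      h1.div (hdiffAt w hw).hasDerivAt (ne_of_gt (hφpos w ⟨hw.1, le_of_lt hw.2⟩))
    convert h2 using 1
    ring
  have hcontg : ∀ (K : ℝ), ∀ t ∈ Set.Ioc (0:ℝ) x₀, ContinuousAt (fun t => (K - t) / φ t) t := by
    intro K t ht
    rcases eq_or_lt_of_le ht.2 with h | h
    · subst h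
      exact (continuousAt_const.sub continuousAt_id).div hdiffx₀.continuousAt
        (by rw [hφx₀]; norm_num)
    · have ht' : t ∈ Set.Ioo (0:ℝ) x₀ := ⟨ht.1, h⟩
      exact (continuousAt_const.sub continuousAt_id).div (hdiffAt t ht').continuousAt
        (ne_of_gt (hφpos t ⟨ht'.1, le_of_lt ht'.2⟩))
  -- z K maximizes g over Ioc 0 x₀
  have hub : ∀ K ∈ Set.Ioo (0:ℝ) Kh, ∀ w ∈ Set.Ioc (0:ℝ) x₀,
      (K - w) / φ w ≤ (K - z K) / φ (z K) := by
    intro K hK w hw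
    obtain ⟨hzK, -⟩ := hz K hK
    rcases lt_trichotomy w (z K) with hlt | heq | hgt
    · have hsub : Set.Icc w (z K) ⊆ Set.Ioo 0 x₀ := fun t ht =>
        ⟨lt_of_lt_of_le hw.1 ht.1, lt_of_le_of_lt ht.2 hzK.2⟩
      have hmono : StrictMonoOn (fun t => (K - t) / φ t) (Set.Icc w (z K)) := by
        refine strictMonoOn_of_deriv_pos (convex_Icc _ _) ?_ ?_
        · exact fun t ht => ((hDg K t (hsub ht)).differentiableAt.continuousAt).continuousWithinAt
        · intro t ht
          rw [interior_Icc] at ht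
          have ht' := hsub ⟨le_of_lt ht.1, le_of_lt ht.2⟩
          rw [(hDg K t ht').deriv]
          have hneg := (hsign K hK t ht').1 ht.2
          have := hφ1 t ⟨ht'.1, le_of_lt ht'.2⟩
          exact div_pos (by linarith) (by positivity)
      exact le_of_lt (hmono ⟨le_refl _, le_of_lt hlt⟩ ⟨le_of_lt hlt, le_refl _⟩ hlt)
    · rw [heq]
    · have hanti : StrictAntiOn (fun t => (K - t) / φ t) (Set.Icc (z K) x₀) := by
        refine strictAntiOn_of_deriv_neg (convex_Icc _ _) ?_ ?_
        · intro t ht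
          exact (hcontg K t ⟨lt_of_lt_of_le hzK.1 ht.1, ht.2⟩).continuousWithinAt
        · intro t ht
          rw [interior_Icc] at ht
          have ht' : t ∈ Set.Ioo (0:ℝ) x₀ := ⟨lt_of_lt_of_le hzK.1 (le_of_lt ht.1), ht.2⟩
          rw [(hDg K t ht').deriv]
          have hpos := (hsign K hK t ht').2 ht.1
          have := hφ1 t ⟨ht'.1, le_of_lt ht'.2⟩
          exact div_neg_of_neg_of_pos (by linarith) (by positivity)
      exact le_of_lt (hanti ⟨le_refl _, le_of_lt hzK.2⟩ ⟨le_of_lt hgt, hw.2⟩ hgt)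
  -- the value of P
  have hPval : ∀ K ∈ Set.Ioo (0:ℝ) Kh, P K = (K - z K) / φ (z K) := by
    intro K hK
    obtain ⟨hzK, -⟩ := hz K hK
    rw [hP K hK.1]
    refine IsGreatest.csSup_eq ⟨⟨z K, ⟨hzK.1, le_of_lt hzK.2⟩, rfl⟩, ?_⟩
    rintro y ⟨w, hw, rfl⟩
    exact hub K hK w hw
  -- continuity of z
  have hzcont : ∀ K ∈ Set.Ioo (0:ℝ) Kh, ∀ ε > (0:ℝ),
      ∀ᶠ K' in 𝓝 K, K' ∈ Set.Ioo (0:ℝ) Kh → |z K' - z K| < ε := by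
    intro K hK ε hε
    obtain ⟨ha, -⟩ := hz K hK
    set a := z K with haa
    set δ := min ε (min (a / 2) ((x₀ - a) / 2)) with hδdef
    have hδ : 0 < δ := lt_min hε (lt_min (by linarith [ha.1]) (by linarith [ha.2]))
    have hδa : δ ≤ a / 2 := le_trans (min_le_right _ _) (min_le_left _ _)
    have hδx : δ ≤ (x₀ - a) / 2 := le_trans (min_le_right _ _) (min_le_right _ _)
    have hδε : δ ≤ ε := min_le_left _ _
    have hw1 : a - δ ∈ Set.Ioo (0:ℝ) x₀ := ⟨by linarith [ha.1], by linarith [ha.2]⟩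
    have hw2 : a + δ ∈ Set.Ioo (0:ℝ) x₀ := ⟨by linarith [ha.1], by linarith [ha.2]⟩
    have h1 : (K - (a - δ)) * deriv φ (a - δ) + φ (a - δ) < 0 :=
      (hsign K hK (a - δ) hw1).1 (by linarith)
    have h2 : 0 < (K - (a + δ)) * deriv φ (a + δ) + φ (a + δ) :=
      (hsign K hK (a + δ) hw2).2 (by linarith)
    have cont1 : Filter.Tendsto (fun K' => (K' - (a - δ)) * deriv φ (a - δ) + φ (a - δ)) (𝓝 K)
        (𝓝 ((K - (a - δ)) * deriv φ (a - δ) + φ (a - δ))) :=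
      (((continuous_id.sub continuous_const).mul continuous_const).add continuous_const).tendsto K
    have cont2 : Filter.Tendsto (fun K' => (K' - (a + δ)) * deriv φ (a + δ) + φ (a + δ)) (𝓝 K)
        (𝓝 ((K - (a + δ)) * deriv φ (a + δ) + φ (a + δ))) :=
      (((continuous_id.sub continuous_const).mul continuous_const).add continuous_const).tendsto K
    filter_upwards [cont1.eventually_lt_const h1, cont2.eventually_const_lt h2] with K' e1 e2 hK'
    obtain ⟨hzK', hfoc'⟩ := hz K' hK'
    have hlt1 : a - δ < z K' := by
      rcases lt_trichotomy (a - δ) (z K') with h | h | h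
      · exact h
      · rw [h] at e1; linarith
      · have := (hsign K' hK' (a - δ) hw1).2 h
        linarith
    have hlt2 : z K' < a + δ := by
      rcases lt_trichotomy (z K') (a + δ) with h | h | h
      · exact h
      · rw [← h] at e2; linarith
      · have := (hsign K' hK' (a + δ) hw2).1 h
        linarith
    rw [abs_lt]
    constructor <;> linarith
  -- continuity of 1/φ∘z
  have hinvcont : ∀ K ∈ Set.Ioo (0:ℝ) Kh, ∀ ε > (0:ℝ),
      ∀ᶠ K' in 𝓝 K, K' ∈ Set.Ioo (0:ℝ) Kh → |1 / φ (z K') - 1 / φ (z K)| < ε := by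
    intro K hK ε hε
    obtain ⟨ha, -⟩ := hz K hK
    have hca : ContinuousAt (fun w => 1 / φ w) (z K) :=
      continuousAt_const.div (hdiffAt _ ha).continuousAt
        (ne_of_gt (hφpos _ ⟨ha.1, le_of_lt ha.2⟩))
    rw [Metric.continuousAt_iff] at hca
    obtain ⟨δ, hδpos, hd⟩ := hca ε hε
    filter_upwards [hzcont K hK δ hδpos] with K' h1 hK'
    have := hd (show dist (z K') (z K) < δ by rw [Real.dist_eq]; exact h1 hK')
    rwa [Real.dist_eq] at this
  -- the derivative of P
  have hDeriv : ∀ K ∈ Set.Ioo (0:ℝ) Kh, HasDerivAt P (1 / φ (z K)) K := by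
    intro K hK
    rw [hasDerivAt_iff_isLittleO, Asymptotics.isLittleO_iff]
    intro c hc
    filter_upwards [hinvcont K hK c hc, isOpen_Ioo.mem_nhds hK] with K' h1 h2
    have habs : |1 / φ (z K') - 1 / φ (z K)| < c := h1 h2
    obtain ⟨hu, -⟩ := hz K hK
    obtain ⟨hv, -⟩ := hz K' h2
    set u := z K
    set v := z K'
    set A := φ u with hAdef
    set B := φ v with hBdef
    have hA : 0 < A := hφpos u ⟨hu.1, le_of_lt hu.2⟩
    have hB : 0 < B := hφpos v ⟨hv.1, le_of_lt hv.2⟩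
    have lb : (K' - u) / A ≤ (K' - v) / B := hub K' h2 u ⟨hu.1, le_of_lt hu.2⟩
    have e2 : (K - v) / B ≤ (K - u) / A := hub K hK v ⟨hv.1, le_of_lt hv.2⟩
    rw [hPval K hK, hPval K' h2, Real.norm_eq_abs, Real.norm_eq_abs, smul_eq_mul]
    have eq1 : (K - u) / A + (K' - K) * (1 / A) = (K' - u) / A := by
      field_simp
      ring
    have eq2 : (K' - K) * (1 / B - 1 / A) =
        ((K' - v) / B - (K - v) / B) - (K' - K) * (1 / A) := by
      field_simp
      ring
    have h0 : 0 ≤ (K' - v) / B - (K - u) / A - (K' - K) * (1 / A) := by linarith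
    have hup : (K' - v) / B - (K - u) / A - (K' - K) * (1 / A) ≤
        (K' - K) * (1 / B - 1 / A) := by linarith
    rw [abs_of_nonneg h0]
    calc (K' - v) / B - (K - u) / A - (K' - K) * (1 / A)
        ≤ (K' - K) * (1 / B - 1 / A) := hup
      _ ≤ |(K' - K) * (1 / B - 1 / A)| := le_abs_self _
      _ = |K' - K| * |1 / B - 1 / A| := abs_mul _ _
      _ ≤ |K' - K| * c := mul_le_mul_of_nonneg_left habs.le (abs_nonneg _)
      _ = c * |K' - K| := mul_comm _ _
  refine ⟨?_, hDeriv⟩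
  rw [show (1 : WithTop ℕ∞) = 0 + 1 by norm_num, contDiffOn_succ_iff_deriv_of_isOpen isOpen_Ioo]
  refine ⟨fun K hK => (hDeriv K hK).differentiableAt.differentiableWithinAt, ?_, ?_⟩
  · intro h; simp at h
  · rw [contDiffOn_zero]
    intro K hK
    rw [Metric.continuousWithinAt_iff]
    intro ε hε
    obtain ⟨δ, hδpos, hd⟩ := Metric.eventually_nhds_iff.1 (hinvcont K hK ε hε)
    refine ⟨δ, hδpos, ?_⟩
    intro y hy hdy
    rw [(hDeriv y hy).deriv, (hDeriv K hK).deriv, Real.dist_eq]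
    exact hd hdy hy
end

section
/- In the setting of the previous statement, for K < K̂ the second derivative of P is P''(K) = (φ'(z(K)))² / ((K−z(K))·φ(z(K))²·φ''(z(K))), and in particular P''(K)>0 on (0,K̂). -/
theorem stmt_10 (x₀ : ℝ) (hx₀ : 0 < x₀) (φ P z : ℝ → ℝ)
    (hC2 : ContDiffOn ℝ 2 φ (Set.Ioo 0 x₀))
    (hφ'' : ∀ x ∈ Set.Ioo (0:ℝ) x₀, 0 < deriv (deriv φ) x)
    (hdec : StrictAntiOn φ (Set.Ioc 0 x₀))
    (hconv : ConvexOn ℝ (Set.Ioc 0 x₀) φ)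
    (hφx₀ : φ x₀ = 1)
    (hφ'x₀ : deriv φ x₀ < 0)
    (hz : ∀ K ∈ Set.Ioo (0:ℝ) (x₀ - 1 / deriv φ x₀),
      z K ∈ Set.Ioo 0 x₀ ∧ (K - z K) * deriv φ (z K) + φ (z K) = 0)
    (hzuniq : ∀ K ∈ Set.Ioo (0:ℝ) (x₀ - 1 / deriv φ x₀),
      ∀ w ∈ Set.Ioo (0:ℝ) x₀,
        (K - w) * deriv φ w + φ w = 0 → w = z K)
    (hP : ∀ K ∈ Set.Ioo (0:ℝ) (x₀ - 1 / deriv φ x₀),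
      P K = (K - z K) / φ (z K)) :
    ∀ K ∈ Set.Ioo (0:ℝ) (x₀ - 1 / deriv φ x₀),
      deriv (deriv P) K =
        (deriv φ (z K)) ^ 2 /
          ((K - z K) * (φ (z K)) ^ 2 * deriv (deriv φ) (z K)) ∧
      0 < deriv (deriv P) K := by
  set Kh := x₀ - 1 / deriv φ x₀ with hKh
  have hSopen : IsOpen (Set.Ioo (0:ℝ) x₀) := isOpen_Ioo
  have hdφ : ∀ x ∈ Set.Ioo (0:ℝ) x₀, HasDerivAt φ (deriv φ x) x := by
    intro x hx
    exact ((hC2.differentiableOn (by norm_num)).differentiableAt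
      (hSopen.mem_nhds hx)).hasDerivAt
  have hC1' : ContDiffOn ℝ 1 (deriv φ) (Set.Ioo (0:ℝ) x₀) :=
    hC2.deriv_of_isOpen hSopen (by norm_num)
  have hdφ' : ∀ x ∈ Set.Ioo (0:ℝ) x₀, HasDerivAt (deriv φ) (deriv (deriv φ) x) x := by
    intro x hx
    exact ((hC1'.differentiableOn (by norm_num)).differentiableAt
      (hSopen.mem_nhds hx)).hasDerivAt
  have hφpos : ∀ x ∈ Set.Ioo (0:ℝ) x₀, 0 < φ x := by
    intro x hx
    have h1 : φ x₀ < φ x := hdec ⟨hx.1, hx.2.le⟩ ⟨hx₀, le_refl x₀⟩ hx.2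
    rw [hφx₀] at h1; linarith
  have hdφmono : StrictMonoOn (deriv φ) (Set.Ioo (0:ℝ) x₀) := by
    apply strictMonoOn_of_deriv_pos (convex_Ioo _ _)
    · exact fun x hx => (hdφ' x hx).continuousAt.continuousWithinAt
    · intro x hx
      rw [interior_Ioo] at hx
      exact hφ'' x hx
  have hφ'neg : ∀ x ∈ Set.Ioo (0:ℝ) x₀, deriv φ x < 0 := by
    intro x hx
    have hxy : x < (x + x₀)/2 := by linarith [hx.2]
    have hyS : (x + x₀)/2 ∈ Set.Ioo (0:ℝ) x₀ :=
      ⟨by linarith [hx.1, hx.2], by linarith [hx.2]⟩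
    have hφy : φ ((x + x₀)/2) < φ x := hdec ⟨hx.1, hx.2.le⟩ ⟨hyS.1, hyS.2.le⟩ hxy
    obtain ⟨c, hc, hcder⟩ := exists_hasDerivAt_eq_slope φ (deriv φ) hxy
      (fun t ht => (hdφ t ⟨lt_of_lt_of_le hx.1 ht.1,
        lt_of_le_of_lt ht.2 hyS.2⟩).continuousAt.continuousWithinAt)
      (fun t ht => hdφ t ⟨lt_trans hx.1 ht.1, lt_trans ht.2 hyS.2⟩)
    have hcS : c ∈ Set.Ioo (0:ℝ) x₀ := ⟨lt_trans hx.1 hc.1, lt_trans hc.2 hyS.2⟩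
    have hcneg : deriv φ c < 0 := by
      rw [hcder]
      apply div_neg_of_neg_of_pos <;> linarith
    calc deriv φ x < deriv φ c := hdφmono hx hcS hc.1
      _ < 0 := hcneg
  set g : ℝ → ℝ := fun w => w - φ w / deriv φ w with hgdef
  have hgd : ∀ w ∈ Set.Ioo (0:ℝ) x₀,
      HasDerivAt g (φ w * deriv (deriv φ) w / (deriv φ w)^2) w := by
    intro w hw
    have hne : deriv φ w ≠ 0 := (hφ'neg w hw).ne
    have h := (hasDerivAt_id w).sub ((hdφ w hw).div (hdφ' w hw) hne)
    refine h.congr_deriv ?_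
    field_simp
    ring
  have hgdpos : ∀ w ∈ Set.Ioo (0:ℝ) x₀, 0 < φ w * deriv (deriv φ) w / (deriv φ w)^2 := by
    intro w hw
    exact div_pos (mul_pos (hφpos w hw) (hφ'' w hw)) (pow_two_pos_of_ne_zero (hφ'neg w hw).ne)
  have hgmono : StrictMonoOn g (Set.Ioo (0:ℝ) x₀) := by
    apply strictMonoOn_of_deriv_pos (convex_Ioo _ _)
    · exact fun w hw => (hgd w hw).continuousAt.continuousWithinAt
    · intro w hw
      rw [interior_Ioo] at hw
      rw [(hgd w hw).deriv]
      exact hgdpos w hw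
  have hzS : ∀ K ∈ Set.Ioo (0:ℝ) Kh, z K ∈ Set.Ioo (0:ℝ) x₀ := fun K hK => (hz K hK).1
  have hgz : ∀ K ∈ Set.Ioo (0:ℝ) Kh, g (z K) = K := by
    intro K hK
    have heq := (hz K hK).2
    have hne : deriv φ (z K) ≠ 0 := (hφ'neg _ (hzS K hK)).ne
    rw [hgdef]
    field_simp
    linear_combination -heq
  have hKz : ∀ K ∈ Set.Ioo (0:ℝ) Kh, z K < K := by
    intro K hK
    have heq := (hz K hK).2
    have hd := hφ'neg _ (hzS K hK)
    have hp := hφpos _ (hzS K hK)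
    by_contra h
    push_neg at h
    nlinarith
  have hzcont : ∀ K ∈ Set.Ioo (0:ℝ) Kh, ContinuousAt z K := by
    intro K hK
    have hzK := hzS K hK
    rw [ContinuousAt, tendsto_order]
    constructor
    · intro a ha
      have ha'S : max a (z K / 2) ∈ Set.Ioo (0:ℝ) x₀ :=
        ⟨lt_of_lt_of_le (by linarith [hzK.1]) (le_max_right _ _),
          max_lt (lt_trans ha hzK.2) (by linarith [hzK.1, hzK.2])⟩
      have ha'lt : max a (z K / 2) < z K := max_lt ha (by linarith [hzK.1])
      have hga : g (max a (z K / 2)) < K := by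
        have h2 := hgmono ha'S hzK ha'lt
        rwa [hgz K hK] at h2
      filter_upwards [isOpen_Ioo.eventually_mem hK, eventually_gt_nhds hga] with K' hK' hga'
      have h2 : g (max a (z K / 2)) < g (z K') := by rw [hgz K' hK']; exact hga'
      exact lt_of_le_of_lt (le_max_left a _)
        ((hgmono.lt_iff_lt ha'S (hzS K' hK')).1 h2)
    · intro b hb
      have hb'S : min b ((z K + x₀)/2) ∈ Set.Ioo (0:ℝ) x₀ :=
        ⟨lt_min (lt_trans hzK.1 hb) (by linarith [hzK.1, hzK.2]),
          lt_of_le_of_lt (min_le_right _ _) (by linarith [hzK.2])⟩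
      have hb'gt : z K < min b ((z K + x₀)/2) := lt_min hb (by linarith [hzK.2])
      have hgb : K < g (min b ((z K + x₀)/2)) := by
        have h2 := hgmono hzK hb'S hb'gt
        rwa [hgz K hK] at h2
      filter_upwards [isOpen_Ioo.eventually_mem hK, eventually_lt_nhds hgb] with K' hK' hgb'
      have h2 : g (z K') < g (min b ((z K + x₀)/2)) := by rw [hgz K' hK']; exact hgb'
      exact lt_of_lt_of_le ((hgmono.lt_iff_lt (hzS K' hK') hb'S).1 h2) (min_le_left b _)
  have hzd : ∀ K ∈ Set.Ioo (0:ℝ) Kh,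
      HasDerivAt z (φ (z K) * deriv (deriv φ) (z K) / (deriv φ (z K))^2)⁻¹ K := by
    intro K hK
    exact HasDerivAt.of_local_left_inverse (hzcont K hK)
      (hgd (z K) (hzS K hK)) (hgdpos _ (hzS K hK)).ne'
      ((isOpen_Ioo.eventually_mem hK).mono fun K' hK' => hgz K' hK')
  have hPd : ∀ K ∈ Set.Ioo (0:ℝ) Kh, HasDerivAt P (1 / φ (z K)) K := by
    intro K hK
    have hzK := hzS K hK
    have hφne : φ (z K) ≠ 0 := (hφpos _ hzK).ne'
    have hzder := hzd K hK
    have h1 := ((hasDerivAt_id K).sub hzder).div ((hdφ _ hzK).comp K hzder) hφne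
    have heven : P =ᶠ[nhds K] fun K' => (id K' - z K') / φ (z K') :=
      (isOpen_Ioo.eventually_mem hK).mono fun K' hK' => by
        simpa using hP K' hK'
    have h2 := h1.congr_of_eventuallyEq heven
    have heq := (hz K hK).2
    have hφ'ne : deriv φ (z K) ≠ 0 := (hφ'neg _ hzK).ne
    have hφ''ne : deriv (deriv φ) (z K) ≠ 0 := (hφ'' _ hzK).ne'
    refine h2.congr_deriv ?_
    simp only [Function.comp, Pi.sub_apply, id]
    field_simp
    linear_combination (-deriv φ (z K) ^ 2) * heq
  intro K hK
  have hzK := hzS K hK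
  have hφne : φ (z K) ≠ 0 := (hφpos _ hzK).ne'
  have hφ'ne : deriv φ (z K) ≠ 0 := (hφ'neg _ hzK).ne
  have hderivP : deriv P =ᶠ[nhds K] fun K' => 1 / φ (z K') :=
    (isOpen_Ioo.eventually_mem hK).mono fun K' hK' => (hPd K' hK').deriv
  have h4 := ((hasDerivAt_const K (1:ℝ)).div ((hdφ _ hzK).comp K (hzd K hK)) hφne)
  have h5 : deriv (deriv P) K =
      (0 * φ (z K) - 1 * (deriv φ (z K) *
        (φ (z K) * deriv (deriv φ) (z K) / deriv φ (z K) ^ 2)⁻¹)) / φ (z K) ^ 2 := by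
    rw [hderivP.deriv_eq]
    exact h4.deriv
  have heq := (hz K hK).2
  have h6 : K - z K = -φ (z K) / deriv φ (z K) := by
    field_simp
    linear_combination heq
  have hmain : deriv (deriv P) K =
      (deriv φ (z K)) ^ 2 / ((K - z K) * (φ (z K)) ^ 2 * deriv (deriv φ) (z K)) := by
    rw [h5, h6]
    have h7 : deriv (deriv φ) (z K) ≠ 0 := (hφ'' _ hzK).ne'
    field_simp
    ring
  refine ⟨hmain, ?_⟩
  rw [hmain]
  apply div_pos (pow_two_pos_of_ne_zero hφ'ne)
  apply mul_pos (mul_pos (by linarith [hKz K hK]) (pow_two_pos_of_ne_zero hφne)) (hφ'' _ hzK)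
end

section
/- In the setting of the previous statement, for each fixed K ≤ K*, the extension of φ to (x₀,∞) defined as any convex decreasing extension with D⁻φ(x₀) = −1/(K*−x₀) satisfies φ(x) ≥ (K−x)⁺/P(K) for all x>0. In particular, for x₀ < x < K one has φ(x) ≥ (K*−x)/(K*−x₀) ≥ (K−x)/(K−x₀) ≥ (K−x)/P(K). -/
theorem stmt_18 (x₀ Kstar : ℝ) (hx₀ : 0 < x₀) (hK : x₀ < Kstar)
    (P φ : ℝ → ℝ)
    (hPmono : MonotoneOn P (Set.Ici 0))
    (hPconv : ConvexOn ℝ (Set.Ici 0) P)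
    (hPbd : ∀ k ≥ (0:ℝ), max (k - x₀) 0 ≤ P k ∧ P k ≤ k)
    (hPlin : ∀ k, Kstar ≤ k → P k = k - x₀)
    (hPx₀ : 0 < P x₀)
    (hφ : ∀ x ∈ Set.Ioc (0:ℝ) x₀,
      φ x = sSup ((fun K => (K - x) / P K) '' Set.Ici x))
    (hφconv : ConvexOn ℝ (Set.Ioi 0) φ)
    (hφdec : AntitoneOn φ (Set.Ioi 0))
    (hφpos : ∀ x > (0:ℝ), 0 < φ x)
    (hφ' : Filter.Tendsto (fun ε => (φ x₀ - φ (x₀ - ε)) / ε)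
      (nhdsWithin 0 (Set.Ioi 0)) (nhds (-1 / (Kstar - x₀))))
    (K : ℝ) (hKmem : K ∈ Set.Ioc x₀ Kstar) :
    (∀ x > (0:ℝ), max (K - x) 0 / P K ≤ φ x) ∧
    ∀ x ∈ Set.Ioo x₀ K,
      (Kstar - x) / (Kstar - x₀) ≤ φ x ∧
      (K - x) / (K - x₀) ≤ (Kstar - x) / (Kstar - x₀) ∧
      (K - x) / P K ≤ (K - x) / (K - x₀) := by
  obtain ⟨hKx₀, hKKstar⟩ := hKmem
  have hKpos : 0 < K := lt_trans hx₀ hKx₀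
  have hKx₀' : (0:ℝ) < K - x₀ := by linarith
  have hStar : (0:ℝ) < Kstar - x₀ := by linarith
  have hPK : K - x₀ ≤ P K := le_trans (le_max_left _ _) (hPbd K (by linarith)).1
  have hPKpos : 0 < P K := lt_of_lt_of_le hKx₀' hPK
  -- φ x₀ ≥ 1
  have hφx₀ : 1 ≤ φ x₀ := by
    rw [hφ x₀ ⟨hx₀, le_rfl⟩]
    have hbdd : BddAbove ((fun K => (K - x₀) / P K) '' Set.Ici x₀) := by
      refine ⟨1, ?_⟩
      rintro y ⟨K', hK', rfl⟩
      have hK'0 : (0:ℝ) ≤ K' := le_trans hx₀.le hK'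
      have hP' : 0 < P K' := lt_of_lt_of_le hPx₀ (hPmono hx₀.le hK'0 hK')
      have : K' - x₀ ≤ P K' := le_trans (le_max_left _ _) (hPbd K' hK'0).1
      exact (div_le_one hP').mpr this
    have h1 : (1:ℝ) = (Kstar - x₀) / P Kstar := by
      rw [hPlin Kstar le_rfl]
      field_simp
    rw [h1]
    exact le_csSup hbdd ⟨Kstar, hK.le, rfl⟩
  -- key: for x > x₀, (Kstar - x)/(Kstar - x₀) ≤ φ x
  have key : ∀ x, x₀ < x → (Kstar - x) / (Kstar - x₀) ≤ φ x := by
    intro x hx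
    have hxpos : 0 < x := lt_trans hx₀ hx
    have hd : 0 < x - x₀ := by linarith
    have hstep : -1 / (Kstar - x₀) ≤ (φ x - φ x₀) / (x - x₀) := by
      refine le_of_tendsto hφ' ?_
      filter_upwards [Ioo_mem_nhdsGT_of_mem
        (show (0:ℝ) ∈ Set.Ico (0:ℝ) x₀ from ⟨le_rfl, hx₀⟩)] with ε hε
      have hε0 : 0 < ε := hε.1
      have h1 : (0:ℝ) < x₀ - ε := by linarith [hε.2]
      have hm := hφconv.slope_mono_adjacent (show x₀ - ε ∈ Set.Ioi (0:ℝ) from h1)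
        (show x ∈ Set.Ioi (0:ℝ) from hxpos) (by linarith : x₀ - ε < x₀) hx
      have heq : (φ x₀ - φ (x₀ - ε)) / ε = (φ x₀ - φ (x₀ - ε)) / (x₀ - (x₀ - ε)) := by
        ring_nf
      rw [heq]
      exact le_trans hm (le_refl _)
    rw [div_le_div_iff₀ (by linarith) hd] at hstep
    rw [div_le_iff₀ hStar]
    nlinarith
  have chain2 : ∀ x ∈ Set.Ioo x₀ K,
      (K - x) / (K - x₀) ≤ (Kstar - x) / (Kstar - x₀) := by
    intro x hx
    rw [div_le_div_iff₀ hKx₀' hStar]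
    nlinarith [hx.1, hx.2]
  have chain3 : ∀ x ∈ Set.Ioo x₀ K, (K - x) / P K ≤ (K - x) / (K - x₀) := by
    intro x hx
    exact div_le_div_of_nonneg_left (by linarith [hx.2]) hKx₀' hPK
  constructor
  · intro x hx
    rcases le_or_gt x x₀ with hle | hgt
    · -- x ∈ (0, x₀]
      rw [hφ x ⟨hx, hle⟩]
      by_cases hbdd : BddAbove ((fun K => (K - x) / P K) '' Set.Ici x)
      · have hmax : max (K - x) 0 = K - x := max_eq_left (by linarith)
        rw [hmax]
        exact le_csSup hbdd (Set.mem_image_of_mem _ (show K ∈ Set.Ici x by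
          simp only [Set.mem_Ici]; linarith))
      · exfalso
        have := hφpos x hx
        rw [hφ x ⟨hx, hle⟩, Real.sSup_of_not_bddAbove hbdd] at this
        exact lt_irrefl 0 this
    · rcases le_or_gt K x with hKx | hxK
      · have : max (K - x) 0 = 0 := max_eq_right (by linarith)
        rw [this, zero_div]
        exact (hφpos x hx).le
      · have hxm : x ∈ Set.Ioo x₀ K := ⟨hgt, hxK⟩
        have : max (K - x) 0 = K - x := max_eq_left (by linarith)
        rw [this]
        calc (K - x) / P K ≤ (K - x) / (K - x₀) := chain3 x hxm
          _ ≤ (Kstar - x) / (Kstar - x₀) := chain2 x hxm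
          _ ≤ φ x := key x hgt
  · intro x hx
    exact ⟨key x hx.1, chain2 x hx, chain3 x hx⟩
end

section
/- Let φ(x)=(x+1)/(2x²) for x>0 and r>0. If σ(x)² := 2r(φ(x)−xφ'(x))/(x²φ''(x)), then σ(x)² = r(2x+3)/(x+3) for all x>0. Moreover, with x₀=1 (so φ(1)=1), the function P(K)=sup_{z≤1}(K−z)/φ(z) satisfies P(K) = ((K+9)^{3/2}(K+1)^{1/2} − (27+18K−K²))/4 for 0<K≤5/3 and P(K)=K−1 for K≥5/3. -/
open Set Filter

private lemma deriv1_aux (x : ℝ) (hx : 0 < x) :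
    HasDerivAt (fun y : ℝ => (y + 1) / (2 * y ^ 2)) (-(x + 2) / (2 * x ^ 3)) x := by
  have h1 : HasDerivAt (fun y : ℝ => y + 1) 1 x := (hasDerivAt_id x).add_const 1
  have h2 : HasDerivAt (fun y : ℝ => 2 * y ^ 2) (2 * (2 * x ^ 1)) x :=
    (hasDerivAt_pow 2 x).const_mul 2
  have h3 := h1.div h2 (by positivity)
  refine h3.congr_deriv ?_
  have hx0 : x ≠ 0 := ne_of_gt hx
  rw [div_eq_div_iff (by positivity) (by positivity)]
  ring

private lemma deriv2_aux (x : ℝ) (hx : 0 < x) :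
    HasDerivAt (fun y : ℝ => -(y + 2) / (2 * y ^ 3)) ((x + 3) / x ^ 4) x := by
  have h1 : HasDerivAt (fun y : ℝ => -(y + 2)) (-1) x := by
    exact ((hasDerivAt_id x).add_const 2).neg
  have h2 : HasDerivAt (fun y : ℝ => 2 * y ^ 3) (2 * (3 * x ^ 2)) x :=
    (hasDerivAt_pow 3 x).const_mul 2
  have h3 := h1.div h2 (by positivity)
  refine h3.congr_deriv ?_
  have hx0 : x ≠ 0 := ne_of_gt hx
  rw [div_eq_div_iff (by positivity) (by positivity)]
  ring

theorem stmt_19 (r : ℝ) (hr : 0 < r)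
    (φ P : ℝ → ℝ)
    (hφ : ∀ x > (0:ℝ), φ x = (x + 1) / (2 * x ^ 2))
    (hP : ∀ K > (0:ℝ),
      P K = sSup ((fun z => (K - z) / φ z) '' Set.Ioc 0 1)) :
    (∀ x > (0:ℝ),
      2 * r * (φ x - x * deriv φ x) / (x ^ 2 * deriv (deriv φ) x) =
        r * (2 * x + 3) / (x + 3)) ∧
    (∀ K, 0 < K → K ≤ 5 / 3 →
      P K = ((K + 9) ^ ((3:ℝ)/2) * (K + 1) ^ ((1:ℝ)/2)
        - (27 + 18 * K - K ^ 2)) / 4) ∧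
    (∀ K, 5 / 3 ≤ K → P K = K - 1) := by
  -- first derivative of φ on (0,∞)
  have hd1 : ∀ x > (0:ℝ), deriv φ x = -(x + 2) / (2 * x ^ 3) := by
    intro x hx
    have hev : φ =ᶠ[nhds x] fun y => (y + 1) / (2 * y ^ 2) :=
      Filter.eventuallyEq_of_mem (isOpen_Ioi.mem_nhds hx) (fun y hy => hφ y hy)
    rw [hev.deriv_eq]
    exact (deriv1_aux x hx).deriv
  have hd2 : ∀ x > (0:ℝ), deriv (deriv φ) x = (x + 3) / x ^ 4 := by
    intro x hx
    have hev : deriv φ =ᶠ[nhds x] fun y => -(y + 2) / (2 * y ^ 3) :=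
      Filter.eventuallyEq_of_mem (isOpen_Ioi.mem_nhds hx) (fun y hy => hd1 y hy)
    rw [hev.deriv_eq]
    exact (deriv2_aux x hx).deriv
  -- general computation of (K - z)/φ z
  have hval : ∀ K : ℝ, ∀ z ∈ Set.Ioc (0:ℝ) 1,
      (K - z) / φ z = 2 * z ^ 2 * (K - z) / (z + 1) := by
    intro K z hz
    rw [hφ z hz.1]
    have hz0 : z ≠ 0 := ne_of_gt hz.1
    have hz1 : z + 1 ≠ 0 := ne_of_gt (by linarith [hz.1])
    field_simp
  refine ⟨?_, ?_, ?_⟩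
  · -- the σ² formula
    intro x hx
    rw [hφ x hx, hd1 x hx, hd2 x hx]
    have hx0 : x ≠ 0 := ne_of_gt hx
    have hx3 : x + 3 ≠ 0 := by positivity
    field_simp
    ring
  · -- 0 < K ≤ 5/3 case
    intro K hK hK53
    have key : ∀ s : ℝ, 0 ≤ s → s ^ 2 = K ^ 2 + 10 * K + 9 →
        sSup ((fun z => (K - z) / φ z) '' Set.Ioc 0 1)
          = ((K + 9) * s - (27 + 18 * K - K ^ 2)) / 4 := by
      intro s hs0 hs2
      set zst : ℝ := (K - 3 + s) / 4 with hzst_def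
      set M : ℝ := ((K + 9) * s - (27 + 18 * K - K ^ 2)) / 4 with hM_def
      have hsgt : 3 - K < s := by nlinarith [hs2, hs0]
      have hzst_pos : 0 < zst := by rw [hzst_def]; linarith
      have hzst_le1 : zst ≤ 1 := by
        have : s ≤ 7 - K := by nlinarith [hs2, hs0]
        rw [hzst_def]; linarith
      have hzst_mem : zst ∈ Set.Ioc (0:ℝ) 1 := ⟨hzst_pos, hzst_le1⟩
      have hEq : 2 * zst ^ 2 * (K - zst) = M * (zst + 1) := by
        rw [hzst_def, hM_def]
        linear_combination ((-9/32 : ℝ) + (-1/32) * s + (-1/32) * K) * hs2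
      have hKzst : zst < K := by
        have : s < 3 * K + 3 := by nlinarith [hs2, hs0]
        rw [hzst_def]; linarith
      have hM_pos : 0 < M := by
        have h1 : 0 < 2 * zst ^ 2 * (K - zst) :=
          mul_pos (by nlinarith [hzst_pos]) (sub_pos.2 hKzst)
        nlinarith [hEq, hzst_pos]
      have hMval : (K - zst) / φ zst = M := by
        rw [hval K zst hzst_mem]
        rw [div_eq_iff (ne_of_gt (by linarith : (0:ℝ) < zst + 1))]
        linarith [hEq]
      have hub : ∀ z ∈ Set.Ioc (0:ℝ) 1, (K - z) / φ z ≤ M := by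
        intro z hz
        rw [hval K z hz]
        rw [div_le_iff₀ (by linarith [hz.1] : (0:ℝ) < z + 1)]
        have hh : (2 * z ^ 3 - 2 * K * z ^ 2 + M * z + M) * zst ^ 2 =
            (z - zst) ^ 2 * (2 * zst ^ 2 * z + M) := by
          rw [hzst_def, hM_def]
          linear_combination ((-81/128 : ℝ) * z + (-9/16) * z^2 + (15/64) * s * z
            + (1/16) * s * z^2 + (-1/128) * s^2 * z + (15/64) * K * z
            + (1/16) * K * z^2 + (-1/64) * K * s * z + (-1/128) * K^2 * z) * hs2
        have haux : 0 ≤ (z - zst) ^ 2 * (2 * zst ^ 2 * z + M) := by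
          have h2 : 0 ≤ 2 * zst ^ 2 * z + M := by
            nlinarith [sq_nonneg zst, hz.1, hM_pos]
          exact mul_nonneg (sq_nonneg _) h2
        nlinarith [hh, haux, mul_pos hzst_pos hzst_pos, hz.1]
      exact IsGreatest.csSup_eq ⟨⟨zst, hzst_mem, hMval⟩,
        fun y hy => by obtain ⟨z, hz, rfl⟩ := hy; exact hub z hz⟩
    have h9 : (0:ℝ) ≤ K + 9 := by linarith
    have h1 : (0:ℝ) ≤ K + 1 := by linarith
    rw [hP K hK, key (Real.sqrt ((K + 1) * (K + 9))) (Real.sqrt_nonneg _)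
      (by rw [Real.sq_sqrt (by nlinarith)]; ring)]
    have t9 : (K + 9) ^ ((3:ℝ)/2) = Real.sqrt (K + 9) ^ 3 := by
      rw [Real.sqrt_eq_rpow, ← Real.rpow_natCast ((K + 9) ^ ((1:ℝ)/2)) 3,
        ← Real.rpow_mul h9]
      norm_num
    have t1 : (K + 1) ^ ((1:ℝ)/2) = Real.sqrt (K + 1) := by
      rw [Real.sqrt_eq_rpow]
    have t2 : Real.sqrt ((K + 1) * (K + 9)) = Real.sqrt (K + 9) * Real.sqrt (K + 1) := by
      rw [show ((K+1)*(K+9) : ℝ) = (K+9)*(K+1) by ring, Real.sqrt_mul h9]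
    have h99 : Real.sqrt (K + 9) ^ 2 = K + 9 := Real.sq_sqrt h9
    rw [t9, t1, t2]
    linear_combination (-(Real.sqrt (K + 9) * Real.sqrt (K + 1)) / 4) * h99
  · -- K ≥ 5/3 case
    intro K hK53
    have hK : (0:ℝ) < K := by linarith
    rw [hP K hK]
    have h1mem : (1:ℝ) ∈ Set.Ioc (0:ℝ) 1 := ⟨one_pos, le_refl 1⟩
    have hMval : (K - 1) / φ 1 = K - 1 := by
      rw [hval K 1 h1mem]; norm_num
    have hub : ∀ z ∈ Set.Ioc (0:ℝ) 1, (K - z) / φ z ≤ K - 1 := by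
      intro z hz
      rw [hval K z hz]
      rw [div_le_iff₀ (by linarith [hz.1] : (0:ℝ) < z + 1)]
      have h1z : (0:ℝ) ≤ 1 - z := by linarith [hz.2]
      have hK1 : (0:ℝ) ≤ K - 1 := by linarith
      have hK5 : (0:ℝ) ≤ 3 * K - 5 := by linarith
      nlinarith [mul_nonneg (mul_nonneg h1z h1z) hK1,
        mul_nonneg (mul_nonneg h1z hz.1.le) hK5,
        mul_nonneg (mul_nonneg h1z hz.1.le) h1z]
    exact IsGreatest.csSup_eq ⟨⟨1, h1mem, hMval⟩,
      fun y hy => by obtain ⟨z, hz, rfl⟩ := hy; exact hub z hz⟩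
end
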